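/- arXiv:2306.09530 — 6 statements merged into one kernel-verified Lean document; each statement's English description precedes it below -/
import Mathlib

section
/- Let ν be a Borel probability measure on ℝ^d, φ ∈ L²(ℝ^d,ℝ^d;ν), k ∈ ℕ, h₁,…,h_k ∈ C²_c(ℝ^d), and f ∈ C¹_b(ℝ^k). For t ∈ ℝ set μ_t := ν∘(Id + tφ)^{-1}. Then the map t ↦ f(μ_t(h₁),…,μ_t(h_k)) is differentiable at t = 0 with derivative Σ_{i=1}^k ∂_i f(ν(h₁),…,ν(h_k)) · ∫_{ℝ^d} ∇h_i(x)·φ(x) dν(x). -/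
open MeasureTheory Real Set

/-- Let `ν` be a Borel probability measure on `ℝ^d`,
`φ ∈ L²(ℝ^d, ℝ^d; ν)`, `k ∈ ℕ`, `h₁, …, h_k ∈ C²_c(ℝ^d)` and `f ∈ C¹_b(ℝ^k)`. For `t ∈ ℝ`
set `μ_t := ν∘(Id + tφ)⁻¹`. Then `t ↦ f(μ_t(h₁), …, μ_t(h_k))` is differentiable at `t = 0`
with derivative `Σ_i ∂_i f(ν(h₁), …, ν(h_k)) · ∫ ∇h_i(x)·φ(x) dν(x)`. -/
theorem stmt_6 (d k : ℕ) (ν : Measure (EuclideanSpace ℝ (Fin d))) [IsProbabilityMeasure ν]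
    (φ : EuclideanSpace ℝ (Fin d) → EuclideanSpace ℝ (Fin d))
    (hφ_meas : Measurable φ)
    (hφ_L2 : MemLp φ 2 ν)
    (h : Fin k → EuclideanSpace ℝ (Fin d) → ℝ)
    (hh_smooth : ∀ i, ContDiff ℝ 2 (h i))
    (hh_supp : ∀ i, HasCompactSupport (h i))
    (f : (Fin k → ℝ) → ℝ)
    (hf : ContDiff ℝ 1 f)
    (hf_bdd : ∃ M : ℝ, ∀ p, |f p| ≤ M ∧ ‖fderiv ℝ f p‖ ≤ M) :
    HasDerivAt
      (fun t : ℝ => f (fun i => ∫ x, h i x ∂(Measure.map (fun x => x + t • φ x) ν)))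
      (∑ i, fderiv ℝ f (fun i => ∫ x, h i x ∂ν) (Pi.single i 1) *
        ∫ x, fderiv ℝ (h i) x (φ x) ∂ν) 0 := by
  -- φ is integrable
  have hφ_int : Integrable φ ν :=
    (hφ_L2.mono_exponent (by norm_num)).integrable le_rfl
  -- rewrite pushforward integrals
  have hmap : ∀ (t : ℝ) (i : Fin k),
      (∫ x, h i x ∂(Measure.map (fun x => x + t • φ x) ν))
        = ∫ x, h i (x + t • φ x) ∂ν := fun t i =>
    integral_map (measurable_id.add (hφ_meas.const_smul t)).aemeasurable
      ((hh_smooth i).continuous.aestronglyMeasurable)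
  -- derivative of each coordinate
  have key : ∀ i : Fin k, HasDerivAt (fun t : ℝ => ∫ x, h i (x + t • φ x) ∂ν)
      (∫ x, fderiv ℝ (h i) x (φ x) ∂ν) 0 := by
    intro i
    have hcont : Continuous (h i) := (hh_smooth i).continuous
    have hd : Differentiable ℝ (h i) := (hh_smooth i).differentiable (by norm_num)
    have hfd_cont : Continuous (fderiv ℝ (h i)) :=
      ((hh_smooth i).fderiv_right (m := 1) (by norm_num)).continuous
    obtain ⟨C, hC⟩ := ((hh_supp i).fderiv ℝ).exists_bound_of_continuous hfd_cont
    -- measurability of F' 0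
    have hF'meas : AEStronglyMeasurable (fun x => fderiv ℝ (h i) (x + (0:ℝ) • φ x) (φ x)) ν := by
      have : Measurable fun x => fderiv ℝ (h i) (x + (0:ℝ) • φ x) (φ x) := by
        have hc : Continuous fun p : (EuclideanSpace ℝ (Fin d)) × (EuclideanSpace ℝ (Fin d)) =>
            fderiv ℝ (h i) p.1 p.2 :=
          (hfd_cont.comp continuous_fst).clm_apply continuous_snd
        exact hc.measurable.comp
          ((measurable_id.add (hφ_meas.const_smul (0:ℝ))).prodMk hφ_meas)
      exact this.aestronglyMeasurable
    have main := hasDerivAt_integral_of_dominated_loc_of_deriv_le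
      (F := fun t x => h i (x + t • φ x))
      (F' := fun t x => fderiv ℝ (h i) (x + t • φ x) (φ x))
      (x₀ := (0:ℝ)) (bound := fun x => C * ‖φ x‖) (μ := ν) (s := Metric.ball (0:ℝ) 1) (Metric.ball_mem_nhds _ one_pos)
      (Filter.Eventually.of_forall fun t => by exact
        (hcont.measurable.comp (measurable_id.add (hφ_meas.const_smul t))).aestronglyMeasurable)
      (by -- integrability of F 0
        obtain ⟨B, hB⟩ := (hh_supp i).exists_bound_of_continuous hcont
        exact (integrable_const B).mono'
          (hcont.measurable.comp (measurable_id.add (hφ_meas.const_smul (0:ℝ)))).aestronglyMeasurable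
          (Filter.Eventually.of_forall fun x => hB _))
      hF'meas
      (Filter.Eventually.of_forall fun x t _ => by
        calc ‖fderiv ℝ (h i) (x + t • φ x) (φ x)‖
            ≤ ‖fderiv ℝ (h i) (x + t • φ x)‖ * ‖φ x‖ := (fderiv ℝ (h i) _).le_opNorm _
          _ ≤ C * ‖φ x‖ := by
              exact mul_le_mul_of_nonneg_right (hC _) (norm_nonneg _))
      (hφ_int.norm.const_mul C)
      (Filter.Eventually.of_forall fun x t _ => by
        have h1 : HasDerivAt (fun s : ℝ => x + s • φ x) (φ x) t := by
          simpa using ((hasDerivAt_id t).smul_const (φ x)).const_add x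
        exact ((hd _).hasFDerivAt).comp_hasDerivAt t h1)
    have := main.2
    simpa using this
  -- the pi-valued curve
  have hpi : HasDerivAt (fun t : ℝ => (fun i => ∫ x, h i (x + t • φ x) ∂ν))
      (fun i => ∫ x, fderiv ℝ (h i) x (φ x) ∂ν) 0 := hasDerivAt_pi.2 key
  have hg0 : (fun i => ∫ x, h i (x + (0:ℝ) • φ x) ∂ν) = fun i => ∫ x, h i x ∂ν := by
    funext i; simp
  have hfd : HasFDerivAt f (fderiv ℝ f (fun i => ∫ x, h i x ∂ν))
      (fun i => ∫ x, h i (x + (0:ℝ) • φ x) ∂ν) := by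
    rw [hg0]; exact ((hf.differentiable one_ne_zero) _).hasFDerivAt
  have hcomp := hfd.comp_hasDerivAt 0 hpi
  -- identify the derivative value
  have hval : fderiv ℝ f (fun i => ∫ x, h i x ∂ν) (fun i => ∫ x, fderiv ℝ (h i) x (φ x) ∂ν)
      = ∑ i, fderiv ℝ f (fun i => ∫ x, h i x ∂ν) (Pi.single i 1) *
        ∫ x, fderiv ℝ (h i) x (φ x) ∂ν := by
    set l := fderiv ℝ f (fun i => ∫ x, h i x ∂ν)
    set c : Fin k → ℝ := fun i => ∫ x, fderiv ℝ (h i) x (φ x) ∂ν with hc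
    have : c = ∑ i, c i • (Pi.single i 1 : Fin k → ℝ) := by
      funext j
      simp [Finset.sum_apply, Pi.single_apply]
    rw [this, map_sum]
    simp [mul_comm]
    rfl
  rw [← hval]
  have heq : (fun t : ℝ => f (fun i => ∫ x, h i x ∂(Measure.map (fun x => x + t • φ x) ν)))
      = fun t : ℝ => f (fun i => ∫ x, h i (x + t • φ x) ∂ν) := by
    funext t; congr 1; funext i; exact hmap t i
  rw [heq]
  exact hcomp
end

section
/- Assume β ∈ C¹(ℝ), β(0) = 0 and 0 < γ ≤ β'(r) ≤ γ₁ < ∞ for all r ∈ ℝ, and assume b: ℝ → ℝ is continuous with 0 < b₀ ≤ b(r) ≤ B < ∞ for all r. Let v: ℝ^d → [0,∞) be Lebesgue-measurable with ∫_{ℝ^d} v(x) dx = 1. Then x ↦ η(v(x)) is Lebesgue-integrable on ℝ^d if and only if x ↦ v(x) log v(x) (set to 0 where v(x) = 0) is Lebesgue-integrable on ℝ^d. -/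
open MeasureTheory Real Set intervalIntegral

/-- `g(s) := ∫₁^s β'(w)/(w·b(w)) dw` (oriented interval integral). -/
noncomputable def gFun (β b : ℝ → ℝ) (s : ℝ) : ℝ :=
  ∫ w in (1 : ℝ)..s, deriv β w / (w * b w)

/-- `η(r) := ∫₀^r g(s) ds`. -/
noncomputable def etaFun (β b : ℝ → ℝ) (r : ℝ) : ℝ :=
  ∫ s in (0 : ℝ)..r, gFun β b s

namespace Stmt8Aux

variable {β b : ℝ → ℝ} {γ γ₁ b₀ B : ℝ}

lemma h_contOn (hβ : ContDiff ℝ 1 β) (hb_cont : Continuous b) (hb₀ : 0 < b₀)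
    (hb_lb : ∀ r, b₀ ≤ b r) :
    ContinuousOn (fun w => deriv β w / (w * b w)) (Ioi (0:ℝ)) := by
  refine ((hβ.continuous_deriv le_rfl).continuousOn).div
    ((continuous_id.mul hb_cont).continuousOn) ?_
  intro w hw
  exact ne_of_gt (mul_pos hw (lt_of_lt_of_le hb₀ (hb_lb w)))

lemma h_intInt (hβ : ContDiff ℝ 1 β) (hb_cont : Continuous b) (hb₀ : 0 < b₀)
    (hb_lb : ∀ r, b₀ ≤ b r) {a c : ℝ} (ha : 0 < a) (hc : 0 < c) :
    IntervalIntegrable (fun w => deriv β w / (w * b w)) volume a c := by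
  refine ((h_contOn hβ hb_cont hb₀ hb_lb).mono ?_).intervalIntegrable
  intro w hw
  rw [Set.uIcc] at hw
  exact lt_of_lt_of_le (lt_min ha hc) hw.1


lemma h_lb (hγ : 0 < γ) (hβ'_lb : ∀ r, γ ≤ deriv β r)
    (hb₀ : 0 < b₀) (hb_lb : ∀ r, b₀ ≤ b r) (hb_ub : ∀ r, b r ≤ B)
    {w : ℝ} (hw : 0 < w) : γ / B * (1 / w) ≤ deriv β w / (w * b w) := by
  have h1 : γ / B * (1 / w) = γ / (w * B) := by
    rw [div_mul_div_comm, mul_one, mul_comm B w]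
  rw [h1]
  apply div_le_div₀ (le_trans hγ.le (hβ'_lb w)) (hβ'_lb w)
    (mul_pos hw (lt_of_lt_of_le hb₀ (hb_lb w)))
  exact mul_le_mul_of_nonneg_left (hb_ub w) hw.le

lemma h_ub (hγ : 0 < γ) (hβ'_lb : ∀ r, γ ≤ deriv β r) (hβ'_ub : ∀ r, deriv β r ≤ γ₁)
    (hb₀ : 0 < b₀) (hb_lb : ∀ r, b₀ ≤ b r)
    {w : ℝ} (hw : 0 < w) : deriv β w / (w * b w) ≤ γ₁ / b₀ * (1 / w) := by
  have h1 : γ₁ / b₀ * (1 / w) = γ₁ / (w * b₀) := by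
    rw [div_mul_div_comm, mul_one, mul_comm b₀ w]
  rw [h1]
  apply div_le_div₀ (le_trans (le_trans hγ.le (hβ'_lb w)) (hβ'_ub w)) (hβ'_ub w)
    (mul_pos hw hb₀)
  exact mul_le_mul_of_nonneg_left (hb_lb w) hw.le

lemma intInt_c_inv (C : ℝ) {a c : ℝ} (ha : 0 < a) (hc : 0 < c) :
    IntervalIntegrable (fun w => C * (1 / w)) volume a c := by
  simp only [mul_one_div]
  apply ContinuousOn.intervalIntegrable
  refine continuousOn_const.div continuousOn_id ?_
  intro w hw
  rw [Set.uIcc] at hw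
  exact ne_of_gt (lt_of_lt_of_le (lt_min ha hc) hw.1)

lemma integral_c_inv (C : ℝ) {a c : ℝ} (ha : 0 < a) (hc : 0 < c) :
    ∫ w in a..c, C * (1 / w) = C * (log c - log a) := by
  have h0 : (0:ℝ) ∉ Set.uIcc a c := by
    rw [Set.uIcc]
    intro h
    exact absurd h.1 (not_le.2 (lt_min ha hc))
  rw [intervalIntegral.integral_const_mul, integral_one_div h0, log_div hc.ne' ha.ne']


lemma g_bounds_ge_one (hβ : ContDiff ℝ 1 β) (hγ : 0 < γ)
    (hβ'_lb : ∀ r, γ ≤ deriv β r) (hβ'_ub : ∀ r, deriv β r ≤ γ₁)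
    (hb_cont : Continuous b) (hb₀ : 0 < b₀)
    (hb_lb : ∀ r, b₀ ≤ b r) (hb_ub : ∀ r, b r ≤ B)
    {s : ℝ} (hs : 1 ≤ s) :
    γ / B * log s ≤ gFun β b s ∧ gFun β b s ≤ γ₁ / b₀ * log s := by
  have h01 : (0:ℝ) < 1 := one_pos
  have hs0 : (0:ℝ) < s := lt_of_lt_of_le one_pos hs
  have hInt := h_intInt hβ hb_cont hb₀ hb_lb (a := 1) (c := s) one_pos hs0
  constructor
  · have := intervalIntegral.integral_mono_on hs (intInt_c_inv (γ/B) one_pos hs0) hInt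
      (fun w hw => h_lb hγ hβ'_lb hb₀ hb_lb hb_ub (lt_of_lt_of_le one_pos hw.1))
    rwa [integral_c_inv _ one_pos hs0, log_one, sub_zero] at this
  · have := intervalIntegral.integral_mono_on hs hInt (intInt_c_inv (γ₁/b₀) one_pos hs0)
      (fun w hw => h_ub hγ hβ'_lb hβ'_ub hb₀ hb_lb (lt_of_lt_of_le one_pos hw.1))
    rwa [integral_c_inv _ one_pos hs0, log_one, sub_zero] at this

lemma g_bounds_le_one (hβ : ContDiff ℝ 1 β) (hγ : 0 < γ)
    (hβ'_lb : ∀ r, γ ≤ deriv β r) (hβ'_ub : ∀ r, deriv β r ≤ γ₁)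
    (hb_cont : Continuous b) (hb₀ : 0 < b₀)
    (hb_lb : ∀ r, b₀ ≤ b r) (hb_ub : ∀ r, b r ≤ B)
    {s : ℝ} (hs0 : 0 < s) (hs : s ≤ 1) :
    γ₁ / b₀ * log s ≤ gFun β b s ∧ gFun β b s ≤ γ / B * log s := by
  have hInt := h_intInt hβ hb_cont hb₀ hb_lb (a := s) (c := 1) hs0 one_pos
  have hsym : gFun β b s = -∫ w in s..(1:ℝ), deriv β w / (w * b w) := by
    rw [gFun, intervalIntegral.integral_symm]
  constructor
  · have := intervalIntegral.integral_mono_on hs hInt (intInt_c_inv (γ₁/b₀) hs0 one_pos)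
      (fun w hw => h_ub hγ hβ'_lb hβ'_ub hb₀ hb_lb (lt_of_lt_of_le hs0 hw.1))
    rw [integral_c_inv _ hs0 one_pos, log_one, zero_sub] at this
    rw [hsym]; linarith
  · have := intervalIntegral.integral_mono_on hs (intInt_c_inv (γ/B) hs0 one_pos) hInt
      (fun w hw => h_lb hγ hβ'_lb hb₀ hb_lb hb_ub (lt_of_lt_of_le hs0 hw.1))
    rw [integral_c_inv _ hs0 one_pos, log_one, zero_sub] at this
    rw [hsym]; linarith

lemma g_contOn (hβ : ContDiff ℝ 1 β) (hb_cont : Continuous b) (hb₀ : 0 < b₀)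
    (hb_lb : ∀ r, b₀ ≤ b r) : ContinuousOn (gFun β b) (Ioi (0:ℝ)) := by
  intro s hs
  have hs0 : (0:ℝ) < s := hs
  have hc := h_contOn hβ hb_cont hb₀ hb_lb
  have : HasDerivAt (gFun β b) (deriv β s / (s * b s)) s := by
    apply intervalIntegral.integral_hasDerivAt_right
      (h_intInt hβ hb_cont hb₀ hb_lb one_pos hs0)
      (hc.stronglyMeasurableAtFilter isOpen_Ioi s hs)
    exact hc.continuousAt (isOpen_Ioi.mem_nhds hs)
  exact this.continuousAt.continuousWithinAt


lemma log_abs_le {x : ℝ} (h0 : 0 < x) (h1 : x ≤ 1) : |log x| ≤ 2 * x ^ (-(1/2) : ℝ) := by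
  have hlog : log x ≤ 0 := log_nonpos h0.le h1
  rw [abs_of_nonpos hlog]
  have h2 : log (x ^ (-(1/2) : ℝ)) ≤ x ^ (-(1/2) : ℝ) - 1 :=
    log_le_sub_one_of_pos (rpow_pos_of_pos h0 _)
  rw [log_rpow h0] at h2
  have : (0:ℝ) < x ^ (-(1/2) : ℝ) := rpow_pos_of_pos h0 _
  nlinarith

lemma log_intInt01 {r : ℝ} (hr : 0 ≤ r) (h1 : r ≤ 1) : IntervalIntegrable log volume 0 r := by
  rw [intervalIntegrable_iff_integrableOn_Ioc_of_le hr]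
  have hdom : IntervalIntegrable (fun x : ℝ => 2 * x ^ (-(1/2) : ℝ)) volume 0 r :=
    (intervalIntegrable_rpow' (by norm_num)).const_mul 2
  rw [intervalIntegrable_iff_integrableOn_Ioc_of_le hr] at hdom
  refine hdom.mono' ?_ ?_
  · exact (Real.measurable_log.aestronglyMeasurable).restrict
  · refine (ae_restrict_iff' measurableSet_Ioc).2 (ae_of_all _ ?_)
    intro x hx
    rw [Real.norm_eq_abs]
    exact log_abs_le hx.1 (hx.2.trans h1)

lemma log_intInt {r : ℝ} (hr : 0 ≤ r) : IntervalIntegrable log volume 0 r := by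
  rcases le_or_gt r 1 with h1 | h1
  · exact log_intInt01 hr h1
  · refine (log_intInt01 zero_le_one le_rfl).trans ?_
    apply intervalIntegrable_log
    rw [Set.uIcc]
    intro h
    have hm := h.1
    rw [min_eq_left h1.le] at hm
    linarith


lemma integral_log0 {r : ℝ} (hr : 0 ≤ r) : ∫ s in (0:ℝ)..r, log s = r * log r - r := by
  have := intervalIntegral.integral_eq_sub_of_hasDerivAt_of_le (f := fun x => x * log x - x)
    (f' := log) hr ((continuous_mul_log.sub continuous_id).continuousOn)
    (fun x hx => by
      have h := (hasDerivAt_mul_log hx.1.ne').sub (hasDerivAt_id' x)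
      rw [add_sub_cancel_right] at h
      exact h)
    (log_intInt hr)
  rw [this]
  simp

lemma g_intInt_le_one (hβ : ContDiff ℝ 1 β) (hγ : 0 < γ)
    (hβ'_lb : ∀ r, γ ≤ deriv β r) (hβ'_ub : ∀ r, deriv β r ≤ γ₁)
    (hb_cont : Continuous b) (hb₀ : 0 < b₀)
    (hb_lb : ∀ r, b₀ ≤ b r) (hb_ub : ∀ r, b r ≤ B)
    {r : ℝ} (hr0 : 0 ≤ r) (hr1 : r ≤ 1) :
    IntervalIntegrable (gFun β b) volume 0 r := by
  have hB : 0 < B := lt_of_lt_of_le hb₀ ((hb_lb 0).trans (hb_ub 0))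
  rw [intervalIntegrable_iff_integrableOn_Ioc_of_le hr0]
  have hdom : IntegrableOn (fun s => γ₁ / b₀ * |log s|) (Ioc 0 r) volume := by
    have : IntegrableOn log (Ioc 0 r) volume := by
      rw [← intervalIntegrable_iff_integrableOn_Ioc_of_le hr0]; exact log_intInt hr0
    exact this.abs.const_mul _
  refine hdom.mono' ?_ ?_
  · exact ((g_contOn hβ hb_cont hb₀ hb_lb).mono Ioc_subset_Ioi_self).aestronglyMeasurable
      measurableSet_Ioc
  · refine (ae_restrict_iff' measurableSet_Ioc).2 (ae_of_all _ ?_)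
    intro x hx
    obtain ⟨hgl, hgu⟩ := g_bounds_le_one hβ hγ hβ'_lb hβ'_ub hb_cont hb₀ hb_lb hb_ub hx.1
      (hx.2.trans hr1)
    have hlog : log x ≤ 0 := log_nonpos hx.1.le (hx.2.trans hr1)
    have habs : |log x| = -log x := abs_of_nonpos hlog
    have hc1 : 0 ≤ γ / B := div_nonneg hγ.le hB.le
    rw [Real.norm_eq_abs, abs_le, habs]
    constructor <;> nlinarith [mul_nonpos_of_nonneg_of_nonpos hc1 hlog]

lemma g_intInt (hβ : ContDiff ℝ 1 β) (hγ : 0 < γ)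
    (hβ'_lb : ∀ r, γ ≤ deriv β r) (hβ'_ub : ∀ r, deriv β r ≤ γ₁)
    (hb_cont : Continuous b) (hb₀ : 0 < b₀)
    (hb_lb : ∀ r, b₀ ≤ b r) (hb_ub : ∀ r, b r ≤ B)
    {r : ℝ} (hr0 : 0 ≤ r) :
    IntervalIntegrable (gFun β b) volume 0 r := by
  rcases le_or_gt r 1 with h1 | h1
  · exact g_intInt_le_one hβ hγ hβ'_lb hβ'_ub hb_cont hb₀ hb_lb hb_ub hr0 h1
  · refine (g_intInt_le_one hβ hγ hβ'_lb hβ'_ub hb_cont hb₀ hb_lb hb_ub zero_le_one le_rfl).trans ?_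
    apply ContinuousOn.intervalIntegrable
    refine (g_contOn hβ hb_cont hb₀ hb_lb).mono ?_
    intro x hx
    rw [Set.uIcc] at hx
    have := hx.1
    rw [min_eq_left h1.le] at this
    exact lt_of_lt_of_le one_pos this

lemma eta_bounds_le_one (hβ : ContDiff ℝ 1 β) (hγ : 0 < γ)
    (hβ'_lb : ∀ r, γ ≤ deriv β r) (hβ'_ub : ∀ r, deriv β r ≤ γ₁)
    (hb_cont : Continuous b) (hb₀ : 0 < b₀)
    (hb_lb : ∀ r, b₀ ≤ b r) (hb_ub : ∀ r, b r ≤ B)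
    {r : ℝ} (hr0 : 0 ≤ r) (hr1 : r ≤ 1) :
    γ₁ / b₀ * (r * log r - r) ≤ etaFun β b r ∧ etaFun β b r ≤ γ / B * (r * log r - r) := by
  have hgInt := g_intInt_le_one hβ hγ hβ'_lb hβ'_ub hb_cont hb₀ hb_lb hb_ub hr0 hr1
  have h0 : ∀ᵐ x : ℝ ∂volume, x ≠ 0 := by
    rw [ae_iff]
    rw [show {x : ℝ | ¬ x ≠ 0} = {0} by ext x; simp]
    exact measure_singleton 0
  have hlogInt : ∀ C : ℝ, IntervalIntegrable (fun s => C * log s) volume 0 r :=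
    fun C => (log_intInt hr0).const_mul C
  have hval : ∀ C : ℝ, ∫ s in (0:ℝ)..r, C * log s = C * (r * log r - r) := by
    intro C; rw [intervalIntegral.integral_const_mul, integral_log0 hr0]
  constructor
  · have := intervalIntegral.integral_mono_ae_restrict hr0 (hlogInt (γ₁/b₀)) hgInt ?_
    · rwa [hval] at this
    · filter_upwards [ae_restrict_of_ae h0, ae_restrict_mem measurableSet_Icc] with x hx hmem
      exact (g_bounds_le_one hβ hγ hβ'_lb hβ'_ub hb_cont hb₀ hb_lb hb_ub
        (lt_of_le_of_ne hmem.1 (Ne.symm hx)) (hmem.2.trans hr1)).1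
  · have := intervalIntegral.integral_mono_ae_restrict hr0 hgInt (hlogInt (γ/B)) ?_
    · rwa [hval] at this
    · filter_upwards [ae_restrict_of_ae h0, ae_restrict_mem measurableSet_Icc] with x hx hmem
      exact (g_bounds_le_one hβ hγ hβ'_lb hβ'_ub hb_cont hb₀ hb_lb hb_ub
        (lt_of_le_of_ne hmem.1 (Ne.symm hx)) (hmem.2.trans hr1)).2

lemma eta_bounds_ge_one (hβ : ContDiff ℝ 1 β) (hγ : 0 < γ)
    (hβ'_lb : ∀ r, γ ≤ deriv β r) (hβ'_ub : ∀ r, deriv β r ≤ γ₁)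
    (hb_cont : Continuous b) (hb₀ : 0 < b₀)
    (hb_lb : ∀ r, b₀ ≤ b r) (hb_ub : ∀ r, b r ≤ B)
    {r : ℝ} (hr : 1 ≤ r) :
    etaFun β b 1 + γ / B * (r * log r - r + 1) ≤ etaFun β b r ∧
      etaFun β b r ≤ etaFun β b 1 + γ₁ / b₀ * (r * log r - r + 1) := by
  have h0 : (0:ℝ) ∉ Set.uIcc 1 r := by
    rw [Set.uIcc]
    intro h
    have := h.1
    rw [min_eq_left hr] at this
    linarith
  have hg1 : IntervalIntegrable (gFun β b) volume 0 1 :=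
    g_intInt_le_one hβ hγ hβ'_lb hβ'_ub hb_cont hb₀ hb_lb hb_ub zero_le_one le_rfl
  have hg2 : IntervalIntegrable (gFun β b) volume 1 r := by
    apply ContinuousOn.intervalIntegrable
    refine (g_contOn hβ hb_cont hb₀ hb_lb).mono ?_
    intro x hx
    rw [Set.uIcc] at hx
    have := hx.1
    rw [min_eq_left hr] at this
    exact lt_of_lt_of_le one_pos this
  have hsplit : etaFun β b r = etaFun β b 1 + ∫ s in (1:ℝ)..r, gFun β b s := by
    rw [etaFun, etaFun, ← intervalIntegral.integral_add_adjacent_intervals hg1 hg2]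
  have hlogInt : ∀ C : ℝ, IntervalIntegrable (fun s => C * log s) volume 1 r :=
    fun C => (intervalIntegrable_log h0).const_mul C
  have hval : ∀ C : ℝ, ∫ s in (1:ℝ)..r, C * log s = C * (r * log r - r + 1) := by
    intro C
    rw [intervalIntegral.integral_const_mul, integral_log]
    simp
  constructor
  · have := intervalIntegral.integral_mono_on hr (hlogInt (γ/B)) hg2 (fun x hx =>
      (g_bounds_ge_one hβ hγ hβ'_lb hβ'_ub hb_cont hb₀ hb_lb hb_ub hx.1).1)
    rw [hval] at this
    rw [hsplit]; linarith
  · have := intervalIntegral.integral_mono_on hr hg2 (hlogInt (γ₁/b₀)) (fun x hx =>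
      (g_bounds_ge_one hβ hγ hβ'_lb hβ'_ub hb_cont hb₀ hb_lb hb_ub hx.1).2)
    rw [hval] at this
    rw [hsplit]; linarith


lemma eta_contOn (hβ : ContDiff ℝ 1 β) (hγ : 0 < γ)
    (hβ'_lb : ∀ r, γ ≤ deriv β r) (hβ'_ub : ∀ r, deriv β r ≤ γ₁)
    (hb_cont : Continuous b) (hb₀ : 0 < b₀)
    (hb_lb : ∀ r, b₀ ≤ b r) (hb_ub : ∀ r, b r ≤ B) :
    ContinuousOn (etaFun β b) (Ici (0:ℝ)) := by
  intro r hr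
  have hr0 : (0:ℝ) ≤ r := hr
  have hcont := intervalIntegral.continuousOn_primitive_interval'
    (g_intInt hβ hγ hβ'_lb hβ'_ub hb_cont hb₀ hb_lb hb_ub (by linarith : (0:ℝ) ≤ r + 1))
    (left_mem_uIcc (a := (0:ℝ)) (b := r + 1))
  have hmem : r ∈ Set.uIcc (0:ℝ) (r+1) := by
    rw [Set.uIcc_of_le (by linarith)]
    exact ⟨hr0, by linarith⟩
  have h1 : ContinuousWithinAt (etaFun β b) (Set.uIcc (0:ℝ) (r+1)) r := hcont r hmem
  refine h1.mono_of_mem_nhdsWithin ?_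
  rw [Set.uIcc_of_le (by linarith), ← Set.Ici_inter_Iic]
  exact inter_mem_nhdsWithin _ (Iic_mem_nhds (by linarith))

end Stmt8Aux

open Stmt8Aux

/-- Assume `β ∈ C¹(ℝ)`, `β(0) = 0`, `0 < γ ≤ β' ≤ γ₁ < ∞`, and `b`
continuous with `0 < b₀ ≤ b ≤ B < ∞`. Let `v : ℝ^d → [0,∞)` be Lebesgue measurable with
`∫ v dx = 1`. Then `x ↦ η(v(x))` is Lebesgue integrable iff `x ↦ v(x)·log v(x)` is.
(In Lean `Real.log 0 = 0`, so the convention `0·log 0 = 0` is automatic.) -/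
theorem stmt_8 (β b : ℝ → ℝ)
    (hβ : ContDiff ℝ 1 β) (hβ0 : β 0 = 0)
    (γ γ₁ : ℝ) (hγ : 0 < γ)
    (hβ'_lb : ∀ r, γ ≤ deriv β r) (hβ'_ub : ∀ r, deriv β r ≤ γ₁)
    (hb_cont : Continuous b)
    (b₀ B : ℝ) (hb₀ : 0 < b₀)
    (hb_lb : ∀ r, b₀ ≤ b r) (hb_ub : ∀ r, b r ≤ B)
    (d : ℕ) (v : EuclideanSpace ℝ (Fin d) → ℝ)
    (hv_meas : Measurable v) (hv_nonneg : ∀ x, 0 ≤ v x)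
    (hv_int : ∫⁻ x, ENNReal.ofReal (v x) = 1) :
    Integrable (fun x => etaFun β b (v x)) volume ↔
    Integrable (fun x => v x * Real.log (v x)) volume := by
  have hB : 0 < B := lt_of_lt_of_le hb₀ ((hb_lb 0).trans (hb_ub 0))
  have hc₁ : 0 < γ / B := div_pos hγ hB
  have hc₂ : 0 < γ₁ / b₀ := div_pos (hγ.trans_le ((hβ'_lb 0).trans (hβ'_ub 0))) hb₀
  -- v is integrable
  have hv_integrable : Integrable v volume := by
    rw [← lintegral_ofReal_ne_top_iff_integrable hv_meas.aestronglyMeasurable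
      (ae_of_all _ hv_nonneg)]
    rw [hv_int]
    exact ENNReal.one_ne_top
  -- the superlevel set {v ≥ 1} has finite measure
  set S : Set (EuclideanSpace ℝ (Fin d)) := {x | 1 ≤ v x} with hSdef
  have hS : MeasurableSet S := measurableSet_le measurable_const hv_meas
  have hμS : volume S < ⊤ := by
    have h := mul_meas_ge_le_lintegral₀
      (μ := volume) (f := fun x => ENNReal.ofReal (v x)) (hv_meas.ennreal_ofReal.aemeasurable) 1
    rw [hv_int, one_mul] at h
    have hset : {x | 1 ≤ ENNReal.ofReal (v x)} = S := by
      ext x; simp [hSdef, ENNReal.one_le_ofReal]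
    rw [hset] at h
    exact lt_of_le_of_lt h ENNReal.one_lt_top
  have hInd : Integrable (S.indicator fun _ => (1:ℝ)) volume :=
    (integrable_indicator_iff hS).2 (integrableOn_const hμS.ne)
  -- measurability of the two compositions
  have hψmeas : AEStronglyMeasurable (fun x => v x * Real.log (v x)) volume :=
    (continuous_mul_log.measurable.comp hv_meas).aestronglyMeasurable
  have hηmeas : AEStronglyMeasurable (fun x => etaFun β b (v x)) volume := by
    have hcont : Continuous fun r : ℝ => etaFun β b (max r 0) :=
      (eta_contOn hβ hγ hβ'_lb hβ'_ub hb_cont hb₀ hb_lb hb_ub).comp_continuous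
        (continuous_id.max continuous_const) (fun x => le_max_right x 0)
    have heq : (fun x => etaFun β b (v x)) = fun x => etaFun β b (max (v x) 0) :=
      funext fun x => by rw [max_eq_left (hv_nonneg x)]
    rw [heq]
    exact (hcont.measurable.comp hv_meas).aestronglyMeasurable
  -- auxiliary entropy inequality: r·log r ≥ r - 1 for r ≥ 1
  have hent : ∀ r : ℝ, 1 ≤ r → r - 1 ≤ r * Real.log r := by
    intro r hr
    have hr0 : (0:ℝ) < r := lt_of_lt_of_le one_pos hr
    have h := Real.log_le_sub_one_of_pos (x := 1/r) (by positivity)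
    rw [one_div, Real.log_inv] at h
    have : 1 - r⁻¹ ≤ Real.log r := by linarith
    have h2 := mul_le_mul_of_nonneg_left this hr0.le
    rw [mul_sub, mul_one, mul_inv_cancel₀ hr0.ne'] at h2
    linarith
  -- the two pointwise comparison estimates
  have key₁ : ∀ r : ℝ, 0 ≤ r → |r * Real.log r| ≤
      (γ/B)⁻¹ * |etaFun β b r| + r +
        ((γ/B)⁻¹ * |etaFun β b 1|) * (if 1 ≤ r then (1:ℝ) else 0) := by
    intro r hr
    rcases le_or_gt r 1 with h1 | h1
    · obtain ⟨hlo, hhi⟩ := eta_bounds_le_one hβ hγ hβ'_lb hβ'_ub hb_cont hb₀ hb_lb hb_ub hr h1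
      have hψ : r * Real.log r ≤ 0 :=
        mul_nonpos_of_nonneg_of_nonpos hr (Real.log_nonpos hr h1)
      have hcm : (γ/B) * ((γ/B)⁻¹ * |etaFun β b r|) = |etaFun β b r| := by
        field_simp
      have hite : 0 ≤ ((γ/B)⁻¹ * |etaFun β b 1|) * (if 1 ≤ r then (1:ℝ) else 0) := by
        positivity
      rw [abs_of_nonpos hψ]
      nlinarith [neg_abs_le (etaFun β b r), abs_nonneg (etaFun β b r), hc₁]
    · obtain ⟨hlo, hhi⟩ := eta_bounds_ge_one hβ hγ hβ'_lb hβ'_ub hb_cont hb₀ hb_lb hb_ub h1.le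
      have hψ : 0 ≤ r * Real.log r := mul_nonneg (by linarith)
        (Real.log_nonneg h1.le)
      have hcm : (γ/B) * ((γ/B)⁻¹ * |etaFun β b r|) = |etaFun β b r| := by field_simp
      have hcm1 : (γ/B) * ((γ/B)⁻¹ * |etaFun β b 1|) = |etaFun β b 1| := by field_simp
      rw [abs_of_nonneg hψ, if_pos h1.le, mul_one]
      nlinarith [le_abs_self (etaFun β b r), neg_abs_le (etaFun β b 1),
        abs_nonneg (etaFun β b r), abs_nonneg (etaFun β b 1), hc₁]
  have key₂ : ∀ r : ℝ, 0 ≤ r → |etaFun β b r| ≤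
      γ₁/b₀ * |r * Real.log r| + γ₁/b₀ * r +
        ((|etaFun β b 1| + γ₁/b₀)) * (if 1 ≤ r then (1:ℝ) else 0) := by
    intro r hr
    rcases le_or_gt r 1 with h1 | h1
    · obtain ⟨hlo, hhi⟩ := eta_bounds_le_one hβ hγ hβ'_lb hβ'_ub hb_cont hb₀ hb_lb hb_ub hr h1
      have hψ : r * Real.log r ≤ 0 :=
        mul_nonpos_of_nonneg_of_nonpos hr (Real.log_nonpos hr h1)
      have hη : etaFun β b r ≤ 0 := by nlinarith
      have hite : 0 ≤ ((|etaFun β b 1| + γ₁/b₀)) * (if 1 ≤ r then (1:ℝ) else 0) := by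
        positivity
      rw [abs_of_nonpos hη, abs_of_nonpos hψ]
      nlinarith
    · obtain ⟨hlo, hhi⟩ := eta_bounds_ge_one hβ hγ hβ'_lb hβ'_ub hb_cont hb₀ hb_lb hb_ub h1.le
      have hψ : 0 ≤ r * Real.log r := mul_nonneg (by linarith) (Real.log_nonneg h1.le)
      have hent' := hent r h1.le
      rw [abs_of_nonneg hψ, if_pos h1.le, mul_one]
      rw [abs_le]
      constructor
      · nlinarith [neg_abs_le (etaFun β b 1), hc₁.le]
      · nlinarith [le_abs_self (etaFun β b 1), hc₂.le]
  -- indicator rewriting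
  have hind_eq : ∀ x, S.indicator (fun _ => (1:ℝ)) x = if 1 ≤ v x then (1:ℝ) else 0 := by
    intro x
    rw [Set.indicator_apply]
    simp [hSdef]
  constructor
  · intro h
    refine Integrable.mono' (g := fun x => (γ/B)⁻¹ * |etaFun β b (v x)| + v x +
      ((γ/B)⁻¹ * |etaFun β b 1|) * S.indicator (fun _ => (1:ℝ)) x) ?_ hψmeas ?_
    · exact ((h.abs.const_mul _).add hv_integrable).add (hInd.const_mul _)
    · refine ae_of_all _ fun x => ?_
      simp only [Real.norm_eq_abs, hind_eq]
      exact key₁ (v x) (hv_nonneg x)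
  · intro h
    refine Integrable.mono' (g := fun x => γ₁/b₀ * |v x * Real.log (v x)| + γ₁/b₀ * v x +
      (|etaFun β b 1| + γ₁/b₀) * S.indicator (fun _ => (1:ℝ)) x) ?_ hηmeas ?_
    · exact ((h.abs.const_mul _).add (hv_integrable.const_mul _)).add (hInd.const_mul _)
    · refine ae_of_all _ fun x => ?_
      simp only [Real.norm_eq_abs, hind_eq]
      exact key₂ (v x) (hv_nonneg x)
end

section
/- Let m > 1, let φ: ℝ^d → ℝ^d be twice continuously differentiable with compact support, and let v: ℝ^d → [0,∞) be measurable and bounded with ∫_{ℝ^d} v(x)^m dx < ∞. Then there is ε > 0 such that the map τ ↦ ∫_{ℝ^d} v(x)^m · (det(I + τ·Dφ(x + τφ(x))))^{−m} · det(I + τ·Dφ(x)) dx is well defined on (−ε,ε) (all determinants being positive there) and differentiable at τ = 0 with derivative (1 − m)·∫_{ℝ^d} v(x)^m · div φ(x) dx. -/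
open MeasureTheory Real Set

/-- The Jacobian matrix of a map `φ : ℝ^d → ℝ^d` at a point `x`:
`(Dφ(x))_{ij} = ∂_j φ_i (x)`. -/
noncomputable def jacobianMatrix {d : ℕ} (φ : EuclideanSpace ℝ (Fin d) → EuclideanSpace ℝ (Fin d))
    (x : EuclideanSpace ℝ (Fin d)) : Matrix (Fin d) (Fin d) ℝ :=
  Matrix.of fun i j => fderiv ℝ φ x (EuclideanSpace.single j 1) i


theorem aux_contDiff_det {P : Type*} [NormedAddCommGroup P] [NormedSpace ℝ P] {d : ℕ}
    {n : ℕ∞} (A : P → Matrix (Fin d) (Fin d) ℝ)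
    (h : ∀ i j, ContDiff ℝ n fun p => A p i j) :
    ContDiff ℝ n fun p => (A p).det := by
  simp only [Matrix.det_apply]
  apply ContDiff.sum
  intro σ _
  have hp : ContDiff ℝ n fun p => ∏ i, A p (σ i) i :=
    contDiff_prod (fun i _ => h (σ i) i)
  simpa [Units.smul_def, zsmul_eq_mul] using contDiff_const.mul hp

theorem aux_exists_ne_move {d : ℕ} (σ : Equiv.Perm (Fin d)) (hσ : σ ≠ 1) (i : Fin d) :
    ∃ j, j ≠ i ∧ σ j ≠ j := by
  obtain ⟨k, hk⟩ : ∃ k, σ k ≠ k := by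
    by_contra h
    push_neg at h
    exact hσ (Equiv.ext h)
  by_cases hki : k = i
  · refine ⟨σ k, ?_, ?_⟩
    · rw [hki] at hk ⊢; exact hk
    · intro h
      exact hk (σ.injective h)
  · exact ⟨k, hki, hk⟩

theorem aux_hasDerivAt_det {d : ℕ} {N : ℝ → Matrix (Fin d) (Fin d) ℝ}
    {N' : Matrix (Fin d) (Fin d) ℝ} {t0 : ℝ}
    (h : ∀ i j, HasDerivAt (fun τ => N τ i j) (N' i j) t0) (hN : N t0 = 1) :
    HasDerivAt (fun τ => (N τ).det) N'.trace t0 := by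
  have key : ∀ σ : Equiv.Perm (Fin d),
      HasDerivAt (fun τ => ∏ i, N τ (σ i) i)
        (if σ = 1 then N'.trace else 0) t0 := by
    intro σ
    have hp : HasDerivAt (fun τ => ∏ i, N τ (σ i) i)
        (∑ i, (∏ j ∈ Finset.univ.erase i, N t0 (σ j) j) • N' (σ i) i) t0 :=
      HasDerivAt.fun_finsetProd (fun i _ => h (σ i) i)
    have hval : (∑ i, (∏ j ∈ Finset.univ.erase i, N t0 (σ j) j) • N' (σ i) i)
        = (if σ = 1 then N'.trace else 0) := by
      by_cases hσ : σ = 1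
      · subst hσ
        simp [hN, Matrix.one_apply_eq, Matrix.trace, Matrix.diag]
      · rw [if_neg hσ]
        apply Finset.sum_eq_zero
        intro i _
        obtain ⟨j, hji, hjm⟩ := aux_exists_ne_move σ hσ i
        have hj0 : N t0 (σ j) j = 0 := by rw [hN]; exact Matrix.one_apply_ne hjm
        have hz : (∏ jj ∈ Finset.univ.erase i, N t0 (σ jj) jj) = 0 :=
          Finset.prod_eq_zero (f := fun jj => N t0 (σ jj) jj)
            (Finset.mem_erase.2 ⟨hji, Finset.mem_univ j⟩) hj0
        rw [hz, zero_smul]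
    exact hval ▸ hp
  have hsum := HasDerivAt.fun_sum (u := Finset.univ)
    (A := fun (σ : Equiv.Perm (Fin d)) τ => Equiv.Perm.sign σ • ∏ i, N τ (σ i) i)
    (A' := fun σ => Equiv.Perm.sign σ • if σ = 1 then N'.trace else 0)
    (fun σ _ => by
      have := (key σ).const_mul (((Equiv.Perm.sign σ : ℤ) : ℝ))
      simpa [Units.smul_def, zsmul_eq_mul] using this)
  simp only [Matrix.det_apply]
  refine hsum.congr_deriv ?_
  simp [smul_ite, Finset.sum_ite_eq']

noncomputable def auxG {d : ℕ} (φ : EuclideanSpace ℝ (Fin d) → EuclideanSpace ℝ (Fin d))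
    (p : ℝ × EuclideanSpace ℝ (Fin d)) : ℝ :=
  (1 + p.1 • jacobianMatrix φ (p.2 + p.1 • φ p.2)).det

noncomputable def auxH {d : ℕ} (φ : EuclideanSpace ℝ (Fin d) → EuclideanSpace ℝ (Fin d))
    (p : ℝ × EuclideanSpace ℝ (Fin d)) : ℝ :=
  (1 + p.1 • jacobianMatrix φ p.2).det

noncomputable def auxg (m : ℝ) {d : ℕ} (φ : EuclideanSpace ℝ (Fin d) → EuclideanSpace ℝ (Fin d))
    (p : ℝ × EuclideanSpace ℝ (Fin d)) : ℝ :=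
  (auxG φ p) ^ (-m) * auxH φ p

section pieces

variable (d : ℕ) (m : ℝ) (φ : EuclideanSpace ℝ (Fin d) → EuclideanSpace ℝ (Fin d))

theorem aux_Jentry (hφ : ContDiff ℝ 2 φ) (i j : Fin d) :
    ContDiff ℝ 1 fun x => jacobianMatrix φ x i j := by
  have hf' : ContDiff ℝ 1 (fderiv ℝ φ) := hφ.fderiv_right (by norm_num)
  have h1 : ContDiff ℝ 1 fun x => (fderiv ℝ φ x) (EuclideanSpace.single j 1) :=
    hf'.clm_apply contDiff_const
  exact (EuclideanSpace.proj (𝕜 := ℝ) i).contDiff.comp h1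

theorem aux_Jzero (x : EuclideanSpace ℝ (Fin d)) (hx : x ∉ tsupport φ) :
    jacobianMatrix φ x = 0 := by
  have h : fderiv ℝ φ x = 0 :=
    image_eq_zero_of_notMem_tsupport fun hmem => hx (tsupport_fderiv_subset ℝ hmem)
  ext i j
  simp [jacobianMatrix, h]

theorem aux_G_contDiff (hφ : ContDiff ℝ 2 φ) : ContDiff ℝ 1 (auxG φ) := by
  have hc : ContDiff ℝ 1 fun p : ℝ × EuclideanSpace ℝ (Fin d) => p.2 + p.1 • φ p.2 :=
    contDiff_snd.add (contDiff_fst.smul ((hφ.of_le (by norm_num)).comp contDiff_snd))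
  apply aux_contDiff_det
  intro i j
  simp only [Matrix.add_apply, Matrix.smul_apply, smul_eq_mul]
  exact contDiff_const.add (contDiff_fst.mul ((aux_Jentry d φ hφ i j).comp hc))

theorem aux_H_contDiff (hφ : ContDiff ℝ 2 φ) : ContDiff ℝ 1 (auxH φ) := by
  apply aux_contDiff_det
  intro i j
  simp only [Matrix.add_apply, Matrix.smul_apply, smul_eq_mul]
  exact contDiff_const.add (contDiff_fst.mul ((aux_Jentry d φ hφ i j).comp contDiff_snd))

theorem aux_G_zero (x : EuclideanSpace ℝ (Fin d)) : auxG φ (0, x) = 1 := by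
  simp [auxG]

theorem aux_H_zero (x : EuclideanSpace ℝ (Fin d)) : auxH φ (0, x) = 1 := by
  simp [auxH]

theorem aux_G_off (p : ℝ × EuclideanSpace ℝ (Fin d)) (hp : p.2 ∉ tsupport φ) :
    auxG φ p = 1 := by
  have hφ0 : φ p.2 = 0 := image_eq_zero_of_notMem_tsupport hp
  simp [auxG, hφ0, aux_Jzero d φ p.2 hp]

theorem aux_H_off (p : ℝ × EuclideanSpace ℝ (Fin d)) (hp : p.2 ∉ tsupport φ) :
    auxH φ p = 1 := by
  simp [auxH, aux_Jzero d φ p.2 hp]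

theorem aux_g_off (p : ℝ × EuclideanSpace ℝ (Fin d)) (hp : p.2 ∉ tsupport φ) :
    auxg m φ p = 1 := by
  simp [auxg, aux_G_off d φ p hp, aux_H_off d φ p hp]

/-- Derivative of `τ ↦ auxG φ (τ, x)` at `0`. -/
theorem aux_G_deriv (hφ : ContDiff ℝ 2 φ) (x : EuclideanSpace ℝ (Fin d)) :
    HasDerivAt (fun τ => auxG φ (τ, x)) (jacobianMatrix φ x).trace 0 := by
  apply aux_hasDerivAt_det (N := fun τ => 1 + τ • jacobianMatrix φ (x + τ • φ x))
    (N' := jacobianMatrix φ x)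
  · intro i j
    have hu : HasDerivAt (fun τ : ℝ => x + τ • φ x) (φ x) 0 := by
      simpa using HasDerivAt.const_add x ((hasDerivAt_id (0 : ℝ)).smul_const (φ x))
    have hcomp : HasDerivAt (fun τ : ℝ => jacobianMatrix φ (x + τ • φ x) i j)
        (fderiv ℝ (fun y => jacobianMatrix φ y i j) x (φ x)) 0 :=
      (((aux_Jentry d φ hφ i j).differentiable one_ne_zero x).hasFDerivAt).comp_hasDerivAt_of_eq 0
        hu (by simp)
    have h2 := ((hasDerivAt_id (0 : ℝ)).mul hcomp).const_add
      ((1 : Matrix (Fin d) (Fin d) ℝ) i j)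
    have : HasDerivAt (fun τ : ℝ =>
        (1 : Matrix (Fin d) (Fin d) ℝ) i j + τ * jacobianMatrix φ (x + τ • φ x) i j)
        (jacobianMatrix φ x i j) 0 := by
      simpa using h2
    simpa [Matrix.add_apply, Matrix.smul_apply, smul_eq_mul] using this
  · simp

theorem aux_H_deriv (hφ : ContDiff ℝ 2 φ) (x : EuclideanSpace ℝ (Fin d)) :
    HasDerivAt (fun τ => auxH φ (τ, x)) (jacobianMatrix φ x).trace 0 := by
  apply aux_hasDerivAt_det (N := fun τ => 1 + τ • jacobianMatrix φ x)
    (N' := jacobianMatrix φ x)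
  · intro i j
    have h2 := ((hasDerivAt_id (0 : ℝ)).mul_const (jacobianMatrix φ x i j)).const_add
      ((1 : Matrix (Fin d) (Fin d) ℝ) i j)
    simpa [Matrix.add_apply, Matrix.smul_apply, smul_eq_mul] using h2
  · simp

theorem aux_g_deriv (hφ : ContDiff ℝ 2 φ) (x : EuclideanSpace ℝ (Fin d)) :
    HasDerivAt (fun τ => auxg m φ (τ, x)) ((1 - m) * (jacobianMatrix φ x).trace) 0 := by
  have hG := aux_G_deriv d φ hφ x
  have hH := aux_H_deriv d φ hφ x
  have hGne : auxG φ (0, x) ≠ 0 := by rw [aux_G_zero]; norm_num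
  have hrpow := hG.rpow_const (p := -m) (Or.inl hGne)
  have hmul := hrpow.mul hH
  have : HasDerivAt (fun τ => auxg m φ (τ, x))
      ((jacobianMatrix φ x).trace * (-m) * auxG φ (0, x) ^ (-m - 1) * auxH φ (0, x)
        + auxG φ (0, x) ^ (-m) * (jacobianMatrix φ x).trace) 0 := hmul
  convert this using 1
  rw [aux_G_zero, aux_H_zero]
  rw [Real.one_rpow, Real.one_rpow]
  ring

end pieces


/-- Let `m > 1`, `φ : ℝ^d → ℝ^d` twice continuously differentiable with
compact support, and `v : ℝ^d → [0,∞)` measurable and bounded with `∫ v^m dx < ∞`. Then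
there is `ε > 0` such that
`τ ↦ ∫ v(x)^m·(det(I + τ·Dφ(x + τφ(x))))^(−m)·det(I + τ·Dφ(x)) dx`
is well defined on `(−ε,ε)` (all determinants being positive there) and differentiable at
`τ = 0` with derivative `(1 − m)·∫ v(x)^m·div φ(x) dx`. -/
theorem stmt_12 (d : ℕ) (m : ℝ) (hm : 1 < m)
    (φ : EuclideanSpace ℝ (Fin d) → EuclideanSpace ℝ (Fin d))
    (hφ : ContDiff ℝ 2 φ) (hφc : HasCompactSupport φ)
    (v : EuclideanSpace ℝ (Fin d) → ℝ)
    (hv_meas : Measurable v) (hv_nonneg : ∀ x, 0 ≤ v x)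
    (hv_bdd : ∃ M : ℝ, ∀ x, v x ≤ M)
    (hvm_int : Integrable (fun x => v x ^ m) volume) :
    ∃ ε > (0 : ℝ),
      (∀ τ ∈ Ioo (-ε) ε, ∀ x,
        0 < (1 + τ • jacobianMatrix φ (x + τ • φ x)).det ∧
        0 < (1 + τ • jacobianMatrix φ x).det) ∧
      (∀ τ ∈ Ioo (-ε) ε,
        Integrable (fun x =>
          v x ^ m * ((1 + τ • jacobianMatrix φ (x + τ • φ x)).det) ^ (-m) *
            (1 + τ • jacobianMatrix φ x).det) volume) ∧
      HasDerivAt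
        (fun τ : ℝ => ∫ x,
          v x ^ m * ((1 + τ • jacobianMatrix φ (x + τ • φ x)).det) ^ (-m) *
            (1 + τ • jacobianMatrix φ x).det)
        ((1 - m) * ∫ x, v x ^ m * (jacobianMatrix φ x).trace) 0 := by
  classical
  have hKc : IsCompact (tsupport φ) := hφc
  have hm0 : (0 : ℝ) ≤ m := by linarith
  have hG := aux_G_contDiff d φ hφ
  have hH := aux_H_contDiff d φ hφ
  -- tube lemma gives uniform positivity
  have hUopen : IsOpen {p : ℝ × EuclideanSpace ℝ (Fin d) | 0 < auxG φ p ∧ 0 < auxH φ p} :=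
    (isOpen_lt continuous_const (hG.continuous)).inter
      (isOpen_lt continuous_const (hH.continuous))
  have hsub : ({0} : Set ℝ) ×ˢ tsupport φ ⊆
      {p : ℝ × EuclideanSpace ℝ (Fin d) | 0 < auxG φ p ∧ 0 < auxH φ p} := by
    rintro ⟨τ, x⟩ ⟨hτ, hx⟩
    simp only [mem_singleton_iff] at hτ
    subst hτ
    constructor
    · rw [aux_G_zero]; norm_num
    · rw [aux_H_zero]; norm_num
  obtain ⟨V, W, hVo, hWo, hV0, hKW, hVW⟩ :=
    generalized_tube_lemma isCompact_singleton hKc hUopen hsub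
  obtain ⟨ε₁, hε₁, hball⟩ := Metric.isOpen_iff.1 hVo 0 (hV0 rfl)
  have hpos : ∀ τ : ℝ, |τ| < ε₁ → ∀ x, 0 < auxG φ (τ, x) ∧ 0 < auxH φ (τ, x) := by
    intro τ hτ x
    by_cases hx : x ∈ tsupport φ
    · exact hVW ⟨hball (by simpa [Real.dist_eq] using hτ), hKW hx⟩
    · rw [aux_G_off d φ (τ, x) hx, aux_H_off d φ (τ, x) hx]; norm_num
  set ε := ε₁ / 2 with hεdef
  have hε : 0 < ε := half_pos hε₁
  have hεlt : ε < ε₁ := half_lt_self hε₁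
  -- the open set where `auxG` is positive
  have hΩo : IsOpen {p : ℝ × EuclideanSpace ℝ (Fin d) | 0 < auxG φ p} :=
    isOpen_lt continuous_const hG.continuous
  have hΩmem : ∀ τ : ℝ, ∀ x, |τ| < ε₁ →
      (τ, x) ∈ {p : ℝ × EuclideanSpace ℝ (Fin d) | 0 < auxG φ p} :=
    fun τ x hτ => (hpos τ hτ x).1
  have hgΩ : ContDiffOn ℝ 1 (auxg m φ) {p : ℝ × EuclideanSpace ℝ (Fin d) | 0 < auxG φ p} := by
    intro p hp
    exact ((hG.contDiffAt.rpow_const_of_ne (ne_of_gt hp)).mul hH.contDiffAt).contDiffWithinAt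
  have hDcont : ContinuousOn
      (fun p => fderiv ℝ (auxg m φ) p ((1 : ℝ), (0 : EuclideanSpace ℝ (Fin d))))
      {p : ℝ × EuclideanSpace ℝ (Fin d) | 0 < auxG φ p} := by
    have h1 := hgΩ.continuousOn_fderiv_of_isOpen hΩo le_rfl
    exact (ContinuousLinearMap.apply ℝ ℝ
      ((1 : ℝ), (0 : EuclideanSpace ℝ (Fin d)))).continuous.comp_continuousOn h1
  have hScomp : IsCompact ((Icc (-ε) ε : Set ℝ) ×ˢ tsupport φ) := isCompact_Icc.prod hKc
  have hScΩ : (Icc (-ε) ε : Set ℝ) ×ˢ tsupport φ ⊆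
      {p : ℝ × EuclideanSpace ℝ (Fin d) | 0 < auxG φ p} := by
    rintro ⟨τ, x⟩ ⟨hτ, hx⟩
    exact hΩmem τ x (lt_of_le_of_lt (abs_le.2 ⟨hτ.1, hτ.2⟩) hεlt)
  obtain ⟨C, hC⟩ := hScomp.exists_bound_of_continuousOn (hDcont.mono hScΩ)
  obtain ⟨Cg, hCg⟩ := hScomp.exists_bound_of_continuousOn ((hgΩ.continuousOn).mono hScΩ)
  have hDoff : ∀ p : ℝ × EuclideanSpace ℝ (Fin d), p.2 ∉ tsupport φ →
      fderiv ℝ (auxg m φ) p = 0 := by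
    intro p hp
    have hOopen : IsOpen {q : ℝ × EuclideanSpace ℝ (Fin d) | q.2 ∉ tsupport φ} :=
      (isClosed_tsupport φ).isOpen_compl.preimage continuous_snd
    have hev : auxg m φ =ᶠ[nhds p] fun _ => (1 : ℝ) :=
      Filter.eventuallyEq_of_mem (hOopen.mem_nhds hp) (fun q hq => aux_g_off d m φ q hq)
    rw [hev.fderiv_eq]
    exact fderiv_const_apply 1
  have hDb : ∀ τ : ℝ, ∀ x, τ ∈ Icc (-ε) ε →
      ‖fderiv ℝ (auxg m φ) (τ, x) ((1 : ℝ), (0 : EuclideanSpace ℝ (Fin d)))‖ ≤ max C 0 := by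
    intro τ x hτ
    by_cases hx : x ∈ tsupport φ
    · exact le_trans (hC (τ, x) ⟨hτ, hx⟩) (le_max_left _ _)
    · rw [hDoff (τ, x) hx]
      simpa using le_max_right C 0
  have hgb : ∀ τ : ℝ, ∀ x, τ ∈ Icc (-ε) ε → ‖auxg m φ (τ, x)‖ ≤ max Cg 1 := by
    intro τ x hτ
    by_cases hx : x ∈ tsupport φ
    · exact le_trans (hCg (τ, x) ⟨hτ, hx⟩) (le_max_left _ _)
    · rw [aux_g_off d m φ (τ, x) hx]
      simpa using le_max_right Cg 1
  have hvm : Measurable fun x => v x ^ m :=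
    (continuous_id.rpow_const (fun _ => Or.inr hm0)).measurable.comp hv_meas
  have hgτ : ∀ τ : ℝ, |τ| < ε₁ → Continuous fun x => auxg m φ (τ, x) := by
    intro τ hτ
    rw [continuous_iff_continuousAt]
    intro x
    have h1 : ContinuousAt (auxg m φ) (τ, x) :=
      (hgΩ.contDiffAt (hΩo.mem_nhds (hΩmem τ x hτ))).continuousAt
    exact h1.comp ((continuous_const.prodMk continuous_id).continuousAt)
  have hDτ0 : Continuous fun x =>
      fderiv ℝ (auxg m φ) ((0 : ℝ), x) ((1 : ℝ), (0 : EuclideanSpace ℝ (Fin d))) := by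
    rw [continuous_iff_continuousAt]
    intro x
    have h1 : ContinuousAt
        (fun p => fderiv ℝ (auxg m φ) p ((1 : ℝ), (0 : EuclideanSpace ℝ (Fin d)))) (0, x) :=
      hDcont.continuousAt (hΩo.mem_nhds (hΩmem 0 x (by simpa using hε₁)))
    exact h1.comp ((continuous_const.prodMk continuous_id).continuousAt)
  -- hypotheses of the dominated differentiation theorem
  have hF_meas : ∀ᶠ τ in nhds (0 : ℝ),
      AEStronglyMeasurable (fun x => v x ^ m * auxg m φ (τ, x)) volume := by
    filter_upwards [Metric.ball_mem_nhds (0 : ℝ) hε₁] with τ hτ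
    have hτ' : |τ| < ε₁ := by simpa [Real.dist_eq] using hτ
    exact (hvm.mul (hgτ τ hτ').measurable).aestronglyMeasurable
  have hF_int : Integrable (fun x => v x ^ m * auxg m φ ((0 : ℝ), x)) volume := by
    have heq : (fun x => v x ^ m * auxg m φ ((0 : ℝ), x)) = fun x => v x ^ m := by
      funext x
      rw [show auxg m φ ((0 : ℝ), x) = 1 by
        rw [auxg, aux_G_zero, aux_H_zero, Real.one_rpow, mul_one]]
      rw [mul_one]
    rw [heq]
    exact hvm_int
  have hF'_meas : AEStronglyMeasurable (fun x => v x ^ m *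
      fderiv ℝ (auxg m φ) ((0 : ℝ), x) ((1 : ℝ), (0 : EuclideanSpace ℝ (Fin d)))) volume :=
    (hvm.mul hDτ0.measurable).aestronglyMeasurable
  have h_bound : ∀ᵐ x ∂(volume : Measure (EuclideanSpace ℝ (Fin d))),
      ∀ τ ∈ Metric.ball (0 : ℝ) ε,
        ‖v x ^ m * fderiv ℝ (auxg m φ) (τ, x) ((1 : ℝ), (0 : EuclideanSpace ℝ (Fin d)))‖ ≤
          max C 0 * v x ^ m := by
    refine Filter.Eventually.of_forall fun x => ?_
    intro τ hτ
    have hτ' : τ ∈ Icc (-ε) ε := by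
      have h2 : |τ| < ε := by simpa [Real.dist_eq] using hτ
      have h3 := abs_le.1 h2.le
      exact ⟨h3.1, h3.2⟩
    rw [norm_mul, Real.norm_eq_abs (v x ^ m), abs_of_nonneg (rpow_nonneg (hv_nonneg x) m),
      mul_comm (max C 0)]
    exact mul_le_mul_of_nonneg_left (hDb τ x hτ') (rpow_nonneg (hv_nonneg x) m)
  have h_bint : Integrable (fun x => max C 0 * v x ^ m) volume := hvm_int.const_mul _
  have h_diff : ∀ᵐ x ∂(volume : Measure (EuclideanSpace ℝ (Fin d))),
      ∀ τ ∈ Metric.ball (0 : ℝ) ε,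
        HasDerivAt (fun τ => v x ^ m * auxg m φ (τ, x))
          (v x ^ m * fderiv ℝ (auxg m φ) (τ, x) ((1 : ℝ), (0 : EuclideanSpace ℝ (Fin d)))) τ := by
    refine Filter.Eventually.of_forall fun x => ?_
    intro τ hτ
    have hτ' : |τ| < ε₁ := lt_trans (by simpa [Real.dist_eq] using hτ) hεlt
    have hdiff : DifferentiableAt ℝ (auxg m φ) (τ, x) :=
      (hgΩ.contDiffAt (hΩo.mem_nhds (hΩmem τ x hτ'))).differentiableAt one_ne_zero
    have hline : HasDerivAt (fun s : ℝ => (s, x)) ((1 : ℝ), (0 : EuclideanSpace ℝ (Fin d))) τ :=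
      (hasDerivAt_id τ).prodMk (hasDerivAt_const τ x)
    exact (hdiff.hasFDerivAt.comp_hasDerivAt τ hline).const_mul (v x ^ m)
  obtain ⟨-, hDer⟩ := hasDerivAt_integral_of_dominated_loc_of_deriv_le (Metric.ball_mem_nhds 0 hε)
    hF_meas hF_int hF'_meas h_bound h_bint h_diff
  -- the value of the derivative
  have hD0 : ∀ x, fderiv ℝ (auxg m φ) ((0 : ℝ), x)
      ((1 : ℝ), (0 : EuclideanSpace ℝ (Fin d))) = (1 - m) * (jacobianMatrix φ x).trace := by
    intro x
    have hdiff : DifferentiableAt ℝ (auxg m φ) ((0 : ℝ), x) :=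
      (hgΩ.contDiffAt (hΩo.mem_nhds (hΩmem 0 x (by simpa using hε₁)))).differentiableAt one_ne_zero
    have hline : HasDerivAt (fun s : ℝ => (s, x))
        ((1 : ℝ), (0 : EuclideanSpace ℝ (Fin d))) 0 :=
      (hasDerivAt_id 0).prodMk (hasDerivAt_const 0 x)
    have h1 : HasDerivAt (fun τ => auxg m φ (τ, x))
        (fderiv ℝ (auxg m φ) ((0 : ℝ), x) ((1 : ℝ), (0 : EuclideanSpace ℝ (Fin d)))) 0 :=
      hdiff.hasFDerivAt.comp_hasDerivAt_of_eq (0 : ℝ) hline (by simp)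
    exact h1.unique (aux_g_deriv d m φ hφ x)
  have hval : (∫ x, v x ^ m *
      fderiv ℝ (auxg m φ) ((0 : ℝ), x) ((1 : ℝ), (0 : EuclideanSpace ℝ (Fin d))))
      = (1 - m) * ∫ x, v x ^ m * (jacobianMatrix φ x).trace := by
    rw [show (fun x => v x ^ m *
        fderiv ℝ (auxg m φ) ((0 : ℝ), x) ((1 : ℝ), (0 : EuclideanSpace ℝ (Fin d))))
        = fun x => (1 - m) * (v x ^ m * (jacobianMatrix φ x).trace) from
      funext fun x => by rw [hD0 x]; ring]
    exact integral_const_mul _ _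
  refine ⟨ε, hε, ?_, ?_, ?_⟩
  · intro τ hτ x
    exact hpos τ (lt_trans (abs_lt.2 ⟨hτ.1, hτ.2⟩) hεlt) x
  · intro τ hτ
    have hτ' : τ ∈ Icc (-ε) ε := Ioo_subset_Icc_self hτ
    have hτε : |τ| < ε₁ := lt_trans (abs_lt.2 ⟨hτ.1, hτ.2⟩) hεlt
    have heq : (fun x => v x ^ m * ((1 + τ • jacobianMatrix φ (x + τ • φ x)).det) ^ (-m) *
        (1 + τ • jacobianMatrix φ x).det) = fun x => v x ^ m * auxg m φ (τ, x) := by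
      funext x
      simp only [auxg, auxG, auxH, mul_assoc]
    rw [heq]
    refine Integrable.mono' (hvm_int.const_mul (max Cg 1))
      ((hvm.mul (hgτ τ hτε).measurable)).aestronglyMeasurable ?_
    refine Filter.Eventually.of_forall fun x => ?_
    rw [norm_mul, Real.norm_eq_abs (v x ^ m), abs_of_nonneg (rpow_nonneg (hv_nonneg x) m),
      mul_comm (max Cg 1)]
    exact mul_le_mul_of_nonneg_left (hgb τ x hτ') (rpow_nonneg (hv_nonneg x) m)
  · have heqf : (fun τ : ℝ => ∫ x,
        v x ^ m * ((1 + τ • jacobianMatrix φ (x + τ • φ x)).det) ^ (-m) *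
          (1 + τ • jacobianMatrix φ x).det)
        = fun τ : ℝ => ∫ x, v x ^ m * auxg m φ (τ, x) := by
      funext τ
      congr 1
      funext x
      simp only [auxg, auxG, auxH, mul_assoc]
    rw [heqf, ← hval]
    exact hDer
end

section
/- Let η: [0,∞) → ℝ be continuous with η(0) = 0, continuously differentiable on (0,∞), and such that r·η'(r) → 0 as r → 0+. Let φ: ℝ^d → ℝ^d be twice continuously differentiable with compact support, and let v: ℝ^d → [0,∞) be measurable and bounded with x ↦ η(v(x)) Lebesgue-integrable. Then there is ε > 0 such that the map τ ↦ ∫_{ℝ^d} η( v(x) · (det(I + τ·Dφ(x + τφ(x))))^{−1} ) · det(I + τ·Dφ(x)) dx is well defined on (−ε,ε) and differentiable at τ = 0 with derivative ∫_{ℝ^d} ( η(v(x)) − η'(v(x))·v(x) ) · div φ(x) dx, where η'(v(x))·v(x) is set to 0 on {v = 0}. -/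
open MeasureTheory Real Set

abbrev Euc (d : ℕ) := EuclideanSpace ℝ (Fin d)

lemma aux_perm_move {d : ℕ} {σ : Equiv.Perm (Fin d)} (hσ : σ ≠ 1) (i : Fin d) :
    ∃ j, j ≠ i ∧ σ j ≠ j := by
  by_contra h
  push_neg at h
  have hi : σ i = i := by
    rcases eq_or_ne (σ i) i with h' | h'
    · exact h'
    · have := h (σ i) h'
      exact absurd (σ.injective this) h'
  exact hσ (Equiv.ext fun j => by rcases eq_or_ne j i with rfl | hj; exacts [hi, h j hj])

lemma aux_det_deriv_zero {d : ℕ} (B : ℝ → Matrix (Fin d) (Fin d) ℝ)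
    (hB : ∀ i j, DifferentiableAt ℝ (fun t => B t i j) 0) :
    HasDerivAt (fun t => (1 + t • B t).det) ((B 0).trace) 0 := by
  have hfun : (fun t => (1 + t • B t).det) =
      fun t => ∑ σ : Equiv.Perm (Fin d), ((Equiv.Perm.sign σ : ℤ) : ℝ) *
        ∏ i, ((if σ i = i then (1:ℝ) else 0) + t * B t (σ i) i) := by
    funext t
    rw [Matrix.det_apply']
    simp [Matrix.add_apply, Matrix.smul_apply, smul_eq_mul, Matrix.one_apply]
  rw [hfun]
  set f : Equiv.Perm (Fin d) → Fin d → ℝ → ℝ :=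
    fun σ i t => (if σ i = i then (1:ℝ) else 0) + t * B t (σ i) i with hf
  have hf0 : ∀ σ i, f σ i 0 = if σ i = i then (1:ℝ) else 0 := by intro σ i; simp [hf]
  have hfd : ∀ σ i, HasDerivAt (f σ i) (B 0 (σ i) i) 0 := by
    intro σ i
    have h1 : HasDerivAt (fun t => t * B t (σ i) i)
        (1 * B 0 (σ i) i + 0 * deriv (fun t => B t (σ i) i) 0) 0 :=
      (hasDerivAt_id 0).mul (hB (σ i) i).hasDerivAt
    simpa [hf] using h1.const_add (if σ i = i then (1:ℝ) else 0)
  have hprod : ∀ σ : Equiv.Perm (Fin d), HasDerivAt (fun t => ∏ i, f σ i t)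
      (∑ i, (∏ j ∈ Finset.univ.erase i, f σ j 0) • B 0 (σ i) i) 0 :=
    fun σ => HasDerivAt.fun_finsetProd (fun i _ => hfd σ i)
  have hsum : HasDerivAt
      (fun t => ∑ σ : Equiv.Perm (Fin d), ((Equiv.Perm.sign σ : ℤ) : ℝ) * ∏ i, f σ i t)
      (∑ σ : Equiv.Perm (Fin d), ((Equiv.Perm.sign σ : ℤ) : ℝ) *
        ∑ i, (∏ j ∈ Finset.univ.erase i, f σ j 0) • B 0 (σ i) i) 0 :=
    HasDerivAt.fun_sum (fun σ _ => (hprod σ).const_mul _)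
  convert hsum using 1
  rw [eq_comm, Finset.sum_eq_single (1 : Equiv.Perm (Fin d))]
  · simp [hf0, Matrix.trace]
  · intro σ _ hσ
    have : ∀ i : Fin d, (∏ j ∈ Finset.univ.erase i, f σ j 0) • B 0 (σ i) i = 0 := by
      intro i
      obtain ⟨j, hji, hjσ⟩ := aux_perm_move hσ i
      rw [Finset.prod_eq_zero (Finset.mem_erase.mpr ⟨hji, Finset.mem_univ j⟩)]
      · simp
      · simp [hf0, hjσ]
    simp only [smul_eq_mul] at this ⊢
    rw [Finset.sum_eq_zero fun i _ => this i, mul_zero]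
  · intro h
    exact absurd (Finset.mem_univ _) h

section aux
variable {d : ℕ} {φ : Euc d → Euc d}

lemma aux_entry (hφ : ContDiff ℝ 2 φ) (i j : Fin d) :
    ContDiff ℝ 1 (fun x : Euc d => fderiv ℝ φ x (EuclideanSpace.single j 1) i) := by
  have h1 : ContDiff ℝ 1 (fderiv ℝ φ) := hφ.fderiv_right (by norm_num)
  exact (((EuclideanSpace.proj i).comp
      (ContinuousLinearMap.apply ℝ (Euc d) (EuclideanSpace.single j 1))).contDiff).comp h1

lemma aux_jac_zero {x : Euc d} (hx : x ∉ tsupport φ) : jacobianMatrix φ x = 0 := by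
  have h : fderiv ℝ φ x = 0 := by
    by_contra h
    exact hx (support_fderiv_subset (𝕜 := ℝ) (f := φ) h)
  ext i j
  simp [jacobianMatrix, h]

lemma aux_G_contDiff_s13 (hφ : ContDiff ℝ 2 φ) {w : ℝ × Euc d → Euc d} (hw : ContDiff ℝ 1 w) :
    ContDiff ℝ 1 (fun q : ℝ × Euc d => (1 + q.1 • jacobianMatrix φ (w q)).det) := by
  have hfun : (fun q : ℝ × Euc d => (1 + q.1 • jacobianMatrix φ (w q)).det) =
      fun q => ∑ σ : Equiv.Perm (Fin d), ((Equiv.Perm.sign σ : ℤ) : ℝ) *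
        ∏ i, ((if σ i = i then (1:ℝ) else 0) +
          q.1 * fderiv ℝ φ (w q) (EuclideanSpace.single i 1) (σ i)) := by
    funext q
    rw [Matrix.det_apply']
    simp [Matrix.add_apply, Matrix.smul_apply, smul_eq_mul, Matrix.one_apply, jacobianMatrix]
  rw [hfun]
  refine ContDiff.sum fun σ _ => contDiff_const.mul (contDiff_prod fun i _ => ?_)
  exact contDiff_const.add (contDiff_fst.mul ((aux_entry hφ (σ i) i).comp hw))
end aux

section GH
variable {d : ℕ}

noncomputable def Gfun (φ : Euc d → Euc d) : ℝ × Euc d → ℝ :=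
  fun q => (1 + q.1 • jacobianMatrix φ (q.2 + q.1 • φ q.2)).det

noncomputable def Hfun (φ : Euc d → Euc d) : ℝ × Euc d → ℝ :=
  fun q => (1 + q.1 • jacobianMatrix φ q.2).det

noncomputable def Gder (φ : Euc d → Euc d) : ℝ × Euc d → ℝ :=
  fun q => fderiv ℝ (Gfun φ) q (1, 0)
noncomputable def Hder (φ : Euc d → Euc d) : ℝ × Euc d → ℝ :=
  fun q => fderiv ℝ (Hfun φ) q (1, 0)

variable {φ : Euc d → Euc d}

lemma Gfun_contDiff (hφ : ContDiff ℝ 2 φ) : ContDiff ℝ 1 (Gfun φ) := by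
  have hw : ContDiff ℝ 1 (fun q : ℝ × Euc d => q.2 + q.1 • φ q.2) :=
    contDiff_snd.add (contDiff_fst.smul ((hφ.of_le one_le_two).comp contDiff_snd))
  exact aux_G_contDiff_s13 hφ hw

lemma Hfun_contDiff (hφ : ContDiff ℝ 2 φ) : ContDiff ℝ 1 (Hfun φ) := by
  have hw : ContDiff ℝ 1 (fun q : ℝ × Euc d => q.2) := contDiff_snd
  exact aux_G_contDiff_s13 hφ hw

lemma Gder_cont (hφ : ContDiff ℝ 2 φ) : Continuous (Gder φ) :=
  (((Gfun_contDiff hφ).continuous_fderiv one_ne_zero).clm_apply continuous_const)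

lemma Hder_cont (hφ : ContDiff ℝ 2 φ) : Continuous (Hder φ) :=
  (((Hfun_contDiff hφ).continuous_fderiv one_ne_zero).clm_apply continuous_const)

lemma Gfun_hasDerivAt (hφ : ContDiff ℝ 2 φ) (t : ℝ) (x : Euc d) :
    HasDerivAt (fun s => Gfun φ (s, x)) (Gder φ (t, x)) t :=
  by
    have hl : HasDerivAt (fun s : ℝ => (s, x)) ((1:ℝ), (0 : Euc d)) t :=
      (hasDerivAt_id t).prodMk (hasDerivAt_const t x)
    have hG : HasFDerivAt (Gfun φ) (fderiv ℝ (Gfun φ) (t, x)) (t, x) :=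
      ((Gfun_contDiff hφ).differentiable one_ne_zero (t, x)).hasFDerivAt
    exact hG.comp_hasDerivAt t hl

lemma Hfun_hasDerivAt (hφ : ContDiff ℝ 2 φ) (t : ℝ) (x : Euc d) :
    HasDerivAt (fun s => Hfun φ (s, x)) (Hder φ (t, x)) t :=
  by
    have hl : HasDerivAt (fun s : ℝ => (s, x)) ((1:ℝ), (0 : Euc d)) t :=
      (hasDerivAt_id t).prodMk (hasDerivAt_const t x)
    have hG : HasFDerivAt (Hfun φ) (fderiv ℝ (Hfun φ) (t, x)) (t, x) :=
      ((Hfun_contDiff hφ).differentiable one_ne_zero (t, x)).hasFDerivAt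
    exact hG.comp_hasDerivAt t hl

lemma Gfun_off (t : ℝ) {x : Euc d} (hx : x ∉ tsupport φ) : Gfun φ (t, x) = 1 := by
  have h1 : φ x = 0 := image_eq_zero_of_notMem_tsupport hx
  simp [Gfun, h1, aux_jac_zero hx, Matrix.det_one]

lemma Hfun_off (t : ℝ) {x : Euc d} (hx : x ∉ tsupport φ) : Hfun φ (t, x) = 1 := by
  simp [Hfun, aux_jac_zero hx, Matrix.det_one]

lemma Gder_off (hφ : ContDiff ℝ 2 φ) (t : ℝ) {x : Euc d} (hx : x ∉ tsupport φ) :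
    Gder φ (t, x) = 0 := by
  have h := Gfun_hasDerivAt hφ t x
  have heq : (fun s => Gfun φ (s, x)) = fun _ => (1:ℝ) := funext fun s => Gfun_off s hx
  rw [heq] at h
  exact h.unique (hasDerivAt_const t 1)

lemma Hder_off (hφ : ContDiff ℝ 2 φ) (t : ℝ) {x : Euc d} (hx : x ∉ tsupport φ) :
    Hder φ (t, x) = 0 := by
  have h := Hfun_hasDerivAt hφ t x
  have heq : (fun s => Hfun φ (s, x)) = fun _ => (1:ℝ) := funext fun s => Hfun_off s hx
  rw [heq] at h
  exact h.unique (hasDerivAt_const t 1)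

lemma Gfun_zero (x : Euc d) : Gfun φ (0, x) = 1 := by simp [Gfun, Matrix.det_one]
lemma Hfun_zero (x : Euc d) : Hfun φ (0, x) = 1 := by simp [Hfun, Matrix.det_one]

lemma Gder_zero (hφ : ContDiff ℝ 2 φ) (x : Euc d) :
    Gder φ (0, x) = (jacobianMatrix φ x).trace := by
  have hB : ∀ i j, DifferentiableAt ℝ (fun t : ℝ => jacobianMatrix φ (x + t • φ x) i j) 0 := by
    intro i j
    have hc : DifferentiableAt ℝ (fun t : ℝ => x + t • φ x) 0 :=
      by fun_prop
    exact DifferentiableAt.comp (0:ℝ) (((aux_entry hφ i j).differentiable one_ne_zero) _) hc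
  have h := aux_det_deriv_zero (fun t => jacobianMatrix φ (x + t • φ x)) hB
  simp only [zero_smul, add_zero] at h
  exact (Gfun_hasDerivAt hφ 0 x).unique h

lemma Hder_zero (hφ : ContDiff ℝ 2 φ) (x : Euc d) :
    Hder φ (0, x) = (jacobianMatrix φ x).trace := by
  have h := aux_det_deriv_zero (fun _ : ℝ => jacobianMatrix φ x)
    (fun i j => differentiableAt_const _)
  exact (Hfun_hasDerivAt hφ 0 x).unique h
end GH

noncomputable def xiT (η' : ℝ → ℝ) : ℝ → ℝ :=
  fun r => if max r 0 = 0 then 0 else (max r 0) * η' (max r 0)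

lemma xiT_cont {η' : ℝ → ℝ} (hη'_cont : ContinuousOn η' (Ioi 0))
    (hη'_lim : Filter.Tendsto (fun r => r * η' r) (nhdsWithin 0 (Ioi 0)) (nhds 0)) :
    Continuous (xiT η') := by
  have hξ : ContinuousOn (fun s : ℝ => if s = 0 then 0 else s * η' s) (Ici 0) := by
    intro r hr
    rcases eq_or_lt_of_le (Set.mem_Ici.mp hr : (0:ℝ) ≤ r) with rfl | hr'
    · rw [ContinuousWithinAt]
      have h0 : (if (0:ℝ) = 0 then (0:ℝ) else 0 * η' 0) = 0 := by simp
      rw [h0, ← Set.Ioi_insert, nhdsWithin_insert, Filter.tendsto_sup]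
      constructor
      · simpa using tendsto_pure_nhds (fun s : ℝ => if s = 0 then 0 else s * η' s) 0
      · refine Filter.Tendsto.congr' ?_ hη'_lim
        filter_upwards [self_mem_nhdsWithin] with s hs
        simp [ne_of_gt (Set.mem_Ioi.mp hs : (0:ℝ) < s)]
    · refine ContinuousWithinAt.mono ?_ (subset_univ _)
      rw [continuousWithinAt_univ]
      refine ContinuousAt.congr (continuousAt_id.mul (hη'_cont.continuousAt (Ioi_mem_nhds hr'))) ?_
      filter_upwards [Ioi_mem_nhds hr'] with s hs
      simp [ne_of_gt (Set.mem_Ioi.mp hs : (0:ℝ) < s)]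
  exact hξ.comp_continuous (continuous_id.max continuous_const)
    (fun r => le_max_right r 0)

lemma xiT_eq {η' : ℝ → ℝ} {r : ℝ} (hr : 0 ≤ r) : xiT η' r = η' r * r := by
  rcases eq_or_lt_of_le hr with rfl | hr'
  · simp [xiT]
  · simp [xiT, max_eq_left hr, ne_of_gt hr', mul_comm]

noncomputable def etaT (η : ℝ → ℝ) : ℝ → ℝ := fun r => η (max r 0)

lemma etaT_cont {η : ℝ → ℝ} (hη_cont : ContinuousOn η (Ici 0)) : Continuous (etaT η) :=
  hη_cont.comp_continuous (continuous_id.max continuous_const) (fun r => le_max_right r 0)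

lemma etaT_eq {η : ℝ → ℝ} {r : ℝ} (hr : 0 ≤ r) : etaT η r = η r := by
  simp [etaT, max_eq_left hr]


/-- Let `η : [0,∞) → ℝ` be continuous with `η(0) = 0`, continuously
differentiable on `(0,∞)` (with derivative `η'`), and `r·η'(r) → 0` as `r → 0⁺`. Let
`φ : ℝ^d → ℝ^d` be `C²` with compact support, and `v : ℝ^d → [0,∞)` measurable and bounded
with `η∘v` Lebesgue integrable. Then there is `ε > 0` such that
`τ ↦ ∫ η(v(x)·(det(I + τ·Dφ(x + τφ(x))))⁻¹)·det(I + τ·Dφ(x)) dx` is well defined on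
`(−ε,ε)` and differentiable at `τ = 0` with derivative
`∫ (η(v(x)) − η'(v(x))·v(x))·div φ(x) dx` (the term `η'(v(x))·v(x)` vanishes on `{v = 0}`
since it carries the factor `v(x) = 0`). -/
theorem stmt_13 (d : ℕ) (η η' : ℝ → ℝ)
    (hη_cont : ContinuousOn η (Ici 0)) (hη0 : η 0 = 0)
    (hη_deriv : ∀ r : ℝ, 0 < r → HasDerivAt η (η' r) r)
    (hη'_cont : ContinuousOn η' (Ioi 0))
    (hη'_lim : Filter.Tendsto (fun r => r * η' r) (nhdsWithin 0 (Ioi 0)) (nhds 0))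
    (φ : EuclideanSpace ℝ (Fin d) → EuclideanSpace ℝ (Fin d))
    (hφ : ContDiff ℝ 2 φ) (hφc : HasCompactSupport φ)
    (v : EuclideanSpace ℝ (Fin d) → ℝ)
    (hv_meas : Measurable v) (hv_nonneg : ∀ x, 0 ≤ v x)
    (hv_bdd : ∃ M : ℝ, ∀ x, v x ≤ M)
    (hηv_int : Integrable (fun x => η (v x)) volume) :
    ∃ ε > (0 : ℝ),
      (∀ τ ∈ Ioo (-ε) ε, ∀ x,
        0 < (1 + τ • jacobianMatrix φ (x + τ • φ x)).det ∧
        0 < (1 + τ • jacobianMatrix φ x).det) ∧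
      (∀ τ ∈ Ioo (-ε) ε,
        Integrable (fun x =>
          η (v x * ((1 + τ • jacobianMatrix φ (x + τ • φ x)).det)⁻¹) *
            (1 + τ • jacobianMatrix φ x).det) volume) ∧
      HasDerivAt
        (fun τ : ℝ => ∫ x,
          η (v x * ((1 + τ • jacobianMatrix φ (x + τ • φ x)).det)⁻¹) *
            (1 + τ • jacobianMatrix φ x).det)
        (∫ x, (η (v x) - η' (v x) * v x) * (jacobianMatrix φ x).trace) 0 := by
  classical
  obtain ⟨M, hM⟩ := hv_bdd
  set M' : ℝ := max M 0 with hM'def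
  have hM' : ∀ x, v x ≤ M' := fun x => le_trans (hM x) (le_max_left M 0)
  have hM'0 : (0:ℝ) ≤ M' := le_max_right M 0
  have hK : IsCompact (tsupport φ) := hφc
  have hηt := etaT_cont hη_cont
  have hξt := xiT_cont hη'_cont hη'_lim
  -- uniform bounds on the determinants
  have hHcont : Continuous (Hfun φ) := (Hfun_contDiff hφ).continuous
  have hGcont : Continuous (Gfun φ) := (Gfun_contDiff hφ).continuous
  have hSopen : IsOpen (Hfun φ ⁻¹' (Ioo (1/2 : ℝ) (3/2))) := isOpen_Ioo.preimage hHcont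
  have hsub : (({(0:ℝ)} : Set ℝ) ×ˢ tsupport φ) ⊆ Hfun φ ⁻¹' (Ioo (1/2:ℝ) (3/2)) := by
    rintro ⟨t, y⟩ ⟨ht, hy⟩
    have ht' : t = 0 := ht
    subst ht'
    have : Hfun φ (0, y) = 1 := Hfun_zero y
    simp only [Set.mem_preimage, this]
    constructor <;> norm_num
  obtain ⟨δ, hδpos, hthick⟩ :=
    (isCompact_singleton.prod hK).exists_thickening_subset_open hSopen hsub
  have key : ∀ t : ℝ, |t| < δ → ∀ y, 1/2 < Hfun φ (t, y) ∧ Hfun φ (t, y) < 3/2 := by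
    intro t ht y
    by_cases hy : y ∈ tsupport φ
    · have hmem : (t, y) ∈ Metric.thickening δ (({(0:ℝ)} : Set ℝ) ×ˢ tsupport φ) := by
        rw [Metric.mem_thickening_iff]
        refine ⟨(0, y), ⟨rfl, hy⟩, ?_⟩
        rw [Prod.dist_eq]
        simpa [Real.dist_eq] using ht
      have := hthick hmem
      exact ⟨this.1, this.2⟩
    · rw [Hfun_off t hy]; norm_num
  have keyG : ∀ t : ℝ, |t| < δ → ∀ x, 1/2 < Gfun φ (t, x) ∧ Gfun φ (t, x) < 3/2 :=
    fun t ht x => key t ht (x + t • φ x)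
  have hGpos : ∀ t : ℝ, |t| < δ → ∀ x, 0 < Gfun φ (t, x) :=
    fun t ht x => lt_trans (by norm_num) (keyG t ht x).1
  have hHpos : ∀ t : ℝ, |t| < δ → ∀ y, 0 < Hfun φ (t, y) :=
    fun t ht y => lt_trans (by norm_num) (key t ht y).1
  have hGinv2 : ∀ t : ℝ, |t| < δ → ∀ x, (Gfun φ (t, x))⁻¹ ≤ 2 := by
    intro t ht x
    rw [← one_div, show (2:ℝ) = 1 / (1/2) by norm_num]
    exact one_div_le_one_div_of_le (by norm_num) (le_of_lt (keyG t ht x).1)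
  have hwmem : ∀ t : ℝ, |t| < δ → ∀ x,
      v x * (Gfun φ (t, x))⁻¹ ∈ Icc (-1 : ℝ) (2*M'+1) := by
    intro t ht x
    have h0 : 0 ≤ v x * (Gfun φ (t, x))⁻¹ :=
      mul_nonneg (hv_nonneg x) (le_of_lt (inv_pos.2 (hGpos t ht x)))
    have h1 : v x * (Gfun φ (t, x))⁻¹ ≤ M' * 2 :=
      mul_le_mul (hM' x) (hGinv2 t ht x) (le_of_lt (inv_pos.2 (hGpos t ht x))) hM'0
    constructor
    · linarith
    · linarith
  have hvmem : ∀ x, v x ∈ Icc (-1 : ℝ) (2*M'+1) := fun x =>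
    ⟨by linarith [hv_nonneg x], by linarith [hM' x]⟩
  -- constants
  obtain ⟨Cη₀, hCη₀⟩ := (isCompact_Icc (a := (-1:ℝ)) (b := 2*M'+1)).exists_bound_of_continuousOn
    hηt.continuousOn
  set Cη : ℝ := max Cη₀ 0 with hCηdef
  have hCη : ∀ r ∈ Icc (-1:ℝ) (2*M'+1), |etaT η r| ≤ Cη := fun r hr =>
    le_trans (by simpa using hCη₀ r hr) (le_max_left _ _)
  have hCη0 : (0:ℝ) ≤ Cη := le_max_right _ _
  obtain ⟨Cξ₀, hCξ₀⟩ := (isCompact_Icc (a := (-1:ℝ)) (b := 2*M'+1)).exists_bound_of_continuousOn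
    hξt.continuousOn
  set Cξ : ℝ := max Cξ₀ 0 with hCξdef
  have hCξ : ∀ r ∈ Icc (-1:ℝ) (2*M'+1), |xiT η' r| ≤ Cξ := fun r hr =>
    le_trans (by simpa using hCξ₀ r hr) (le_max_left _ _)
  have hCξ0 : (0:ℝ) ≤ Cξ := le_max_right _ _
  obtain ⟨Cd₀, hCd₀⟩ := ((isCompact_Icc (a := -δ) (b := δ)).prod hK).exists_bound_of_continuousOn
    (((Gder_cont hφ).abs.add (Hder_cont hφ).abs)).continuousOn
  set Cd : ℝ := max Cd₀ 0 with hCddef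
  have hCd0 : (0:ℝ) ≤ Cd := le_max_right _ _
  have hCdG : ∀ t : ℝ, |t| < δ → ∀ x ∈ tsupport φ, |Gder φ (t, x)| ≤ Cd := by
    intro t ht x hx
    have hmem : (t, x) ∈ Icc (-δ) δ ×ˢ tsupport φ :=
      ⟨⟨le_of_lt (abs_lt.1 ht).1, le_of_lt (abs_lt.1 ht).2⟩, hx⟩
    have h := hCd₀ (t, x) hmem
    rw [Real.norm_eq_abs, Pi.add_apply, abs_of_nonneg (by positivity)] at h
    have h2 : |Gder φ (t, x)| ≤ Cd₀ := by linarith [abs_nonneg (Hder φ (t, x))]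
    exact le_trans h2 (le_max_left _ _)
  have hCdH : ∀ t : ℝ, |t| < δ → ∀ x ∈ tsupport φ, |Hder φ (t, x)| ≤ Cd := by
    intro t ht x hx
    have hmem : (t, x) ∈ Icc (-δ) δ ×ˢ tsupport φ :=
      ⟨⟨le_of_lt (abs_lt.1 ht).1, le_of_lt (abs_lt.1 ht).2⟩, hx⟩
    have h := hCd₀ (t, x) hmem
    rw [Real.norm_eq_abs, Pi.add_apply, abs_of_nonneg (by positivity)] at h
    have h2 : |Hder φ (t, x)| ≤ Cd₀ := by linarith [abs_nonneg (Gder φ (t, x))]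
    exact le_trans h2 (le_max_left _ _)
  -- continuity in x for fixed t
  have hGxc : ∀ t : ℝ, Continuous (fun x : Euc d => Gfun φ (t, x)) :=
    fun t => hGcont.comp (continuous_const.prodMk continuous_id)
  have hHxc : ∀ t : ℝ, Continuous (fun x : Euc d => Hfun φ (t, x)) :=
    fun t => hHcont.comp (continuous_const.prodMk continuous_id)
  have hGdxc : ∀ t : ℝ, Continuous (fun x : Euc d => Gder φ (t, x)) :=
    fun t => (Gder_cont hφ).comp (continuous_const.prodMk continuous_id)
  have hHdxc : ∀ t : ℝ, Continuous (fun x : Euc d => Hder φ (t, x)) :=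
    fun t => (Hder_cont hφ).comp (continuous_const.prodMk continuous_id)
  -- measurability of the integrand
  have hFmeas : ∀ t : ℝ, |t| < δ → AEStronglyMeasurable
      (fun x => η (v x * (Gfun φ (t, x))⁻¹) * Hfun φ (t, x)) volume := by
    intro t ht
    have heq : (fun x => η (v x * (Gfun φ (t, x))⁻¹) * Hfun φ (t, x))
        = fun x => etaT η (v x * (Gfun φ (t, x))⁻¹) * Hfun φ (t, x) := by
      funext x
      rw [etaT_eq (mul_nonneg (hv_nonneg x) (le_of_lt (inv_pos.2 (hGpos t ht x))))]
    rw [heq]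
    exact ((hηt.measurable.comp (hv_meas.mul (hGxc t).measurable.inv)).mul
      (hHxc t).measurable).aestronglyMeasurable
  -- integrability of the integrand
  have hFint : ∀ t : ℝ, |t| < δ → Integrable
      (fun x => η (v x * (Gfun φ (t, x))⁻¹) * Hfun φ (t, x)) volume := by
    intro t ht
    set D : Euc d → ℝ := fun x => η (v x * (Gfun φ (t, x))⁻¹) * Hfun φ (t, x) - η (v x) with hD
    have hDm : AEStronglyMeasurable D volume :=
      (hFmeas t ht).sub hηv_int.aestronglyMeasurable
    have hDb : ∀ x, ‖D x‖ ≤ Cη * (3/2) + Cη := by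
      intro x
      have hw0 : 0 ≤ v x * (Gfun φ (t, x))⁻¹ :=
        mul_nonneg (hv_nonneg x) (le_of_lt (inv_pos.2 (hGpos t ht x)))
      have h1 : |η (v x * (Gfun φ (t, x))⁻¹)| ≤ Cη := by
        rw [← etaT_eq (η := η) hw0]
        exact hCη _ (hwmem t ht x)
      have h2 : |Hfun φ (t, x)| ≤ 3/2 := by
        rw [abs_of_pos (hHpos t ht x)]
        exact le_of_lt (key t ht x).2
      have h3 : |η (v x)| ≤ Cη := by
        rw [← etaT_eq (η := η) (hv_nonneg x)]
        exact hCη _ (hvmem x)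
      simp only [hD]
      calc ‖η (v x * (Gfun φ (t, x))⁻¹) * Hfun φ (t, x) - η (v x)‖
          ≤ |η (v x * (Gfun φ (t, x))⁻¹) * Hfun φ (t, x)| + |η (v x)| := norm_sub_le _ _
        _ ≤ Cη * (3/2) + Cη := by
            rw [abs_mul]
            gcongr
    have hD0 : ∀ x, x ∉ tsupport φ → D x = 0 := by
      intro x hx
      simp only [hD]
      simp [Gfun_off t hx, Hfun_off t hx]
    have hDind : D = (tsupport φ).indicator D := by
      funext x
      by_cases hx : x ∈ tsupport φ
      · rw [Set.indicator_of_mem hx]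
      · rw [Set.indicator_of_notMem hx, hD0 x hx]
    have hDint : Integrable D volume := by
      rw [hDind]
      exact (integrable_indicator_iff hK.measurableSet).2
        (Measure.integrableOn_of_bounded hK.measure_lt_top.ne hDm (ae_of_all _ hDb))
    have hsplit : (fun x => η (v x * (Gfun φ (t, x))⁻¹) * Hfun φ (t, x))
        = fun x => η (v x) + D x := by
      funext x
      simp only [hD]
      ring
    rw [hsplit]
    exact hηv_int.add hDint
  -- the candidate derivative integrand
  set F' : ℝ → Euc d → ℝ := fun t x =>
    etaT η (v x * (Gfun φ (t, x))⁻¹) * Hder φ (t, x) -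
      xiT η' (v x * (Gfun φ (t, x))⁻¹) * Gder φ (t, x) * (Gfun φ (t, x))⁻¹ * Hfun φ (t, x)
    with hF'
  have hF'meas : AEStronglyMeasurable (F' 0) volume := by
    simp only [hF']
    have m1 : Measurable fun x : Euc d => v x * (Gfun φ (0, x))⁻¹ :=
      hv_meas.mul (hGxc 0).measurable.inv
    exact (((hηt.measurable.comp m1).mul (hHdxc 0).measurable).sub
      ((((hξt.measurable.comp m1).mul (hGdxc 0).measurable).mul
        (hGxc 0).measurable.inv).mul (hHxc 0).measurable)).aestronglyMeasurable
  -- the uniform bound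
  set bound : Euc d → ℝ :=
    (tsupport φ).indicator (fun _ => Cη * Cd + Cξ * Cd * 2 * (3/2)) with hbound
  have hboundint : Integrable bound volume := by
    rw [hbound]
    exact (integrable_indicator_iff hK.measurableSet).2
      (integrableOn_const hK.measure_lt_top.ne)
  have h_bound : ∀ᵐ x ∂(volume : Measure (Euc d)), ∀ t ∈ Metric.ball (0:ℝ) δ,
      ‖F' t x‖ ≤ bound x := by
    refine ae_of_all _ fun x t ht => ?_
    have ht' : |t| < δ := by
      rw [Metric.mem_ball, Real.dist_eq, sub_zero] at ht
      exact ht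
    by_cases hx : x ∈ tsupport φ
    · rw [hbound, Set.indicator_of_mem hx]
      have hw0 : 0 ≤ v x * (Gfun φ (t, x))⁻¹ :=
        mul_nonneg (hv_nonneg x) (le_of_lt (inv_pos.2 (hGpos t ht' x)))
      have h1 : |etaT η (v x * (Gfun φ (t, x))⁻¹)| ≤ Cη := hCη _ (hwmem t ht' x)
      have h2 : |xiT η' (v x * (Gfun φ (t, x))⁻¹)| ≤ Cξ := hCξ _ (hwmem t ht' x)
      have h3 : |Gder φ (t, x)| ≤ Cd := hCdG t ht' x hx
      have h4 : |Hder φ (t, x)| ≤ Cd := hCdH t ht' x hx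
      have h5 : |(Gfun φ (t, x))⁻¹| ≤ 2 := by
        rw [abs_of_pos (inv_pos.2 (hGpos t ht' x))]
        exact hGinv2 t ht' x
      have h6 : |Hfun φ (t, x)| ≤ 3/2 := by
        rw [abs_of_pos (hHpos t ht' x)]
        exact le_of_lt (key t ht' x).2
      simp only [hF', Real.norm_eq_abs]
      calc |etaT η (v x * (Gfun φ (t, x))⁻¹) * Hder φ (t, x) -
          xiT η' (v x * (Gfun φ (t, x))⁻¹) * Gder φ (t, x) * (Gfun φ (t, x))⁻¹ * Hfun φ (t, x)|
          ≤ |etaT η (v x * (Gfun φ (t, x))⁻¹) * Hder φ (t, x)| +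
            |xiT η' (v x * (Gfun φ (t, x))⁻¹) * Gder φ (t, x) * (Gfun φ (t, x))⁻¹ * Hfun φ (t, x)|
            := abs_sub _ _
        _ ≤ Cη * Cd + Cξ * Cd * 2 * (3/2) := by
            rw [abs_mul, abs_mul, abs_mul, abs_mul]
            gcongr <;> first | exact abs_nonneg _ | positivity
    · rw [hbound, Set.indicator_of_notMem hx]
      simp only [hF']
      simp [Gder_off hφ t hx, Hder_off hφ t hx]
  -- differentiability in t
  have h_diff : ∀ᵐ x ∂(volume : Measure (Euc d)), ∀ t ∈ Metric.ball (0:ℝ) δ,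
      HasDerivAt (fun s => η (v x * (Gfun φ (s, x))⁻¹) * Hfun φ (s, x)) (F' t x) t := by
    refine ae_of_all _ fun x t ht => ?_
    have ht' : |t| < δ := by
      rw [Metric.mem_ball, Real.dist_eq, sub_zero] at ht
      exact ht
    rcases eq_or_lt_of_le (hv_nonneg x) with hv0 | hvpos
    · have hfun0 : (fun s => η (v x * (Gfun φ (s, x))⁻¹) * Hfun φ (s, x)) = fun _ => 0 := by
        funext s
        rw [← hv0, zero_mul, hη0, zero_mul]
      have hF'0 : F' t x = 0 := by
        simp only [hF']
        rw [← hv0, zero_mul]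
        have e1 : etaT η 0 = 0 := by simp [etaT, hη0]
        have e2 : xiT η' 0 = 0 := by simp [xiT]
        rw [e1, e2, zero_mul, zero_mul, zero_mul, zero_mul, sub_zero]
      rw [hfun0, hF'0]
      exact hasDerivAt_const t 0
    · have hGp := hGpos t ht' x
      have hGne : Gfun φ (t, x) ≠ 0 := ne_of_gt hGp
      have hw : HasDerivAt (fun s => v x * (Gfun φ (s, x))⁻¹)
          (v x * (-Gder φ (t, x) / Gfun φ (t, x) ^ 2)) t :=
        ((Gfun_hasDerivAt hφ t x).inv hGne).const_mul (v x)
      have hwpos : 0 < v x * (Gfun φ (t, x))⁻¹ := mul_pos hvpos (inv_pos.2 hGp)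
      have hcomp := (hη_deriv _ hwpos).comp t hw
      have hmul := hcomp.mul (Hfun_hasDerivAt hφ t x)
      have hmul' : HasDerivAt (fun s => η (v x * (Gfun φ (s, x))⁻¹) * Hfun φ (s, x))
          (η' (v x * (Gfun φ (t, x))⁻¹) * (v x * (-Gder φ (t, x) / Gfun φ (t, x) ^ 2)) *
              Hfun φ (t, x) +
            η (v x * (Gfun φ (t, x))⁻¹) * Hder φ (t, x)) t := hmul
      have hval : F' t x =
          η' (v x * (Gfun φ (t, x))⁻¹) * (v x * (-Gder φ (t, x) / Gfun φ (t, x) ^ 2)) *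
              Hfun φ (t, x) +
            η (v x * (Gfun φ (t, x))⁻¹) * Hder φ (t, x) := by
        simp only [hF']
        rw [etaT_eq (le_of_lt hwpos), xiT_eq (le_of_lt hwpos)]
        field_simp
        ring
      rw [hval]
      exact hmul'
  -- apply the dominated differentiation theorem
  have hFmeas' : ∀ᶠ t in nhds (0:ℝ), AEStronglyMeasurable
      (fun x => η (v x * (Gfun φ (t, x))⁻¹) * Hfun φ (t, x)) volume := by
    filter_upwards [Metric.ball_mem_nhds (0:ℝ) hδpos] with t ht
    have ht' : |t| < δ := by
      rw [Metric.mem_ball, Real.dist_eq, sub_zero] at ht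
      exact ht
    exact hFmeas t ht'
  have main := hasDerivAt_integral_of_dominated_loc_of_deriv_le (μ := volume) (x₀ := (0:ℝ))
    (F := fun t x => η (v x * (Gfun φ (t, x))⁻¹) * Hfun φ (t, x)) (F' := F')
    (bound := bound) (Metric.ball_mem_nhds (0:ℝ) hδpos) hFmeas' (hFint 0 (by simpa using hδpos)) hF'meas h_bound
    hboundint h_diff
  have hval0 : (∫ x, F' 0 x) =
      ∫ x, (η (v x) - η' (v x) * v x) * (jacobianMatrix φ x).trace := by
    refine integral_congr_ae (ae_of_all _ fun x => ?_)
    simp only [hF']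
    rw [Gfun_zero, Gder_zero hφ, Hder_zero hφ, Hfun_zero, inv_one, mul_one,
      etaT_eq (hv_nonneg x), xiT_eq (hv_nonneg x)]
    ring
  rw [hval0] at main
  refine ⟨δ, hδpos, ?_, ?_, ?_⟩
  · intro τ hτ x
    have ht' : |τ| < δ := abs_lt.2 ⟨hτ.1, hτ.2⟩
    exact ⟨hGpos τ ht' x, hHpos τ ht' x⟩
  · intro τ hτ
    have ht' : |τ| < δ := abs_lt.2 ⟨hτ.1, hτ.2⟩
    exact hFint τ ht'
  · exact main.2
end

section
/- Let (μ_t)_{t>0} be Borel probability measures on ℝ^d such that t ↦ μ_t(A) is Borel measurable for every Borel set A. Let A: (0,∞)×ℝ^d → ℝ and B: (0,∞)×ℝ^d → ℝ^d be Borel functions with A and |B| locally Lebesgue-integrable on (0,∞)×ℝ^d, and suppose that for all 0 < s < t and all ζ ∈ C²_c(ℝ^d): ∫ζ dμ_t − ∫ζ dμ_s = ∫_s^t ∫_{ℝ^d} ( A(r,x)·Δζ(x) + B(r,x)·∇ζ(x) ) dx dr. Then there exists a Lebesgue-null set N ⊆ (0,∞) such that for every t ∈ (0,∞)∖N and every ζ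 ∈ C²_c(ℝ^d), the map τ ↦ ∫ζ dμ_τ is differentiable at τ = t with derivative ∫_{ℝ^d} ( A(t,x)·Δζ(x) + B(t,x)·∇ζ(x) ) dx. -/
open MeasureTheory Real Set

/-- The Laplacian of `ζ : ℝ^d → ℝ` at `x`: `Δζ(x) = Σ_i ∂²_{ii} ζ(x)`. -/
noncomputable def lapl {d : ℕ} (ζ : EuclideanSpace ℝ (Fin d) → ℝ)
    (x : EuclideanSpace ℝ (Fin d)) : ℝ :=
  ∑ i, fderiv ℝ (fun y => fderiv ℝ ζ y (EuclideanSpace.single i 1)) x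
    (EuclideanSpace.single i 1)

open Filter Metric Topology
open scoped Interval

section Aux

lemma lebesguePoints (f : ℝ → ℝ) (hf : LocallyIntegrable f volume) :
    ∀ᵐ t : ℝ, Filter.Tendsto (fun δ => ⨍ y in closedBall t δ, |f y - f t|) (𝓝[>] (0:ℝ)) (𝓝 0) := by
  filter_upwards [IsUnifLocDoublingMeasure.ae_tendsto_average_norm_sub (μ := volume) hf 1]
    with t ht
  have h1 : ∀ᶠ δ in 𝓝[>] (0:ℝ), t ∈ closedBall t (1 * δ) := by
    filter_upwards [self_mem_nhdsWithin] with δ (hδ : (0:ℝ) < δ)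
    simp [Metric.mem_closedBall, le_of_lt hδ]
  simpa [Real.norm_eq_abs] using ht (fun _ => t) id tendsto_id h1

lemma locint_const_mul {f : ℝ → ℝ} (C : ℝ) (h : LocallyIntegrable f volume) :
    LocallyIntegrable (fun r => C * f r) volume := by
  intro x
  obtain ⟨s, hs, hi⟩ := h x
  exact ⟨s, hs, hi.const_mul C⟩

lemma aux_locint {G : Set ℝ} (hG : MeasurableSet G) {h : ℝ → ℝ}
    (hsm : AEStronglyMeasurable h volume)
    {q : ℝ} (hGq : G ⊆ Ioi q)
    {W : ℝ → ℝ} (hW : ∀ b : ℝ, IntegrableOn W (Icc q b) volume)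
    (hbd : ∀ r ∈ G, |h r| ≤ W r) :
    LocallyIntegrable (G.indicator h) volume := by
  rw [locallyIntegrable_iff]
  intro C hC
  obtain ⟨R, hR⟩ := hC.isBounded.subset_closedBall 0
  have h1 : IntegrableOn (G.indicator h) (closedBall (0:ℝ) R) volume := by
    rw [IntegrableOn, integrable_indicator_iff hG, IntegrableOn, Measure.restrict_restrict hG]
    have h2 : G ∩ closedBall (0:ℝ) R ⊆ Icc q (max q R) := by
      rintro r ⟨hrG, hrB⟩
      refine ⟨le_of_lt (hGq hrG), le_max_of_le_right ?_⟩
      have := mem_closedBall.1 hrB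
      rw [Real.dist_eq, sub_zero] at this
      exact (le_abs_self r).trans this
    refine Integrable.mono ((hW (max q R)).mono_set h2) hsm.restrict ?_
    refine (ae_restrict_iff' (hG.inter measurableSet_closedBall)).2
      (Filter.Eventually.of_forall fun r hr => ?_)
    simpa [Real.norm_eq_abs] using (hbd r hr.1).trans (le_abs_self _)
  exact h1.mono_set hR

end Aux

section Zeta

variable {d : ℕ}

local notation "E" => EuclideanSpace ℝ (Fin d)

lemma lapl_continuous {ζ : E → ℝ} (hζ : ContDiff ℝ 2 ζ) : Continuous (lapl ζ) := by
  apply continuous_finset_sum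
  intro i _
  have h1 : ContDiff ℝ 1 (fderiv ℝ ζ) := hζ.fderiv_right (by norm_num)
  have h2 : ContDiff ℝ 1 (fun y => fderiv ℝ ζ y (EuclideanSpace.single i 1)) := by
    exact (ContinuousLinearMap.apply ℝ ℝ
      (EuclideanSpace.single i 1) : ((E) →L[ℝ] ℝ) →L[ℝ] ℝ).contDiff.comp h1
  have h3 : Continuous (fderiv ℝ (fun y => fderiv ℝ ζ y (EuclideanSpace.single i 1))) :=
    h2.continuous_fderiv one_ne_zero
  exact ((ContinuousLinearMap.apply ℝ ℝ
    (EuclideanSpace.single i 1) : ((E) →L[ℝ] ℝ) →L[ℝ] ℝ).continuous.comp h3 : _)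

lemma fderiv_zero_of_nmem {ζ : E → ℝ} {x : E} (hx : x ∉ tsupport ζ) : fderiv ℝ ζ x = 0 := by
  have hev : ζ =ᶠ[𝓝 x] (fun _ => (0:ℝ)) := by
    filter_upwards [(isClosed_tsupport ζ).isOpen_compl.mem_nhds hx] with y hy
    exact image_eq_zero_of_notMem_tsupport hy
  rw [hev.fderiv_eq]
  exact fderiv_const_apply 0

lemma lapl_zero_of_nmem {ζ : E → ℝ} {x : E} (hx : x ∉ tsupport ζ) : lapl ζ x = 0 := by
  apply Finset.sum_eq_zero
  intro i _
  have hev : (fun y => fderiv ℝ ζ y (EuclideanSpace.single i 1)) =ᶠ[𝓝 x]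
      (fun _ => (0:ℝ)) := by
    filter_upwards [(isClosed_tsupport ζ).isOpen_compl.mem_nhds hx] with y hy
    rw [fderiv_zero_of_nmem hy]
    rfl
  rw [hev.fderiv_eq, fderiv_const_apply]
  rfl

end Zeta

def KK (d k : ℕ) : Set (EuclideanSpace ℝ (Fin d)) := Metric.closedBall 0 k

instance KK.compactSpace (d k : ℕ) : CompactSpace (KK d k) :=
  isCompact_iff_compactSpace.mp (isCompact_closedBall _ _)

lemma KK.measurableSet (d k : ℕ) : MeasurableSet (KK d k) := measurableSet_closedBall

section Core

lemma core (f F H : ℝ → ℝ) (t : ℝ)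
    (hf : LocallyIntegrable f volume)
    (hH : LocallyIntegrable H volume)
    (hF : ∀ᶠ τ in 𝓝 t, F τ - F t = ∫ r in t..τ, f r)
    (hHt : Filter.Tendsto (fun δ => ⨍ y in closedBall t δ, |H y - H t|) (𝓝[>] (0:ℝ)) (𝓝 0))
    (happ : ∀ ε : ℝ, 0 < ε → ∃ φ : ℝ → ℝ, LocallyIntegrable φ volume ∧
        (∀ r, |f r - φ r| ≤ ε * H r) ∧
        Filter.Tendsto (fun δ => ⨍ y in closedBall t δ, |φ y - φ t|) (𝓝[>] (0:ℝ)) (𝓝 0)) :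
    HasDerivAt F (f t) t := by
  have hHt0 : 0 ≤ H t := by
    obtain ⟨φ, -, hb, -⟩ := happ 1 one_pos
    have h := (abs_nonneg (f t - φ t)).trans (hb t); linarith
  rw [hasDerivAt_iff_tendsto_slope, Metric.tendsto_nhds]
  intro ε hε
  set ε' := ε / (8 * (H t + 1)) with hε'def
  have hε' : 0 < ε' := by positivity
  have h8 : ε' * (8 * (H t + 1)) = ε := by rw [hε'def]; field_simp
  obtain ⟨φ, hφloc, hφb, hφt⟩ := happ ε' hε'
  have habs : Filter.Tendsto (fun τ : ℝ => |τ - t|) (𝓝[≠] t) (𝓝[>] (0:ℝ)) := by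
    apply tendsto_nhdsWithin_of_tendsto_nhds_of_eventually_within
    · have h1 : Filter.Tendsto (fun τ : ℝ => |τ - t|) (𝓝 t) (𝓝 |t - t|) :=
        ((continuous_id.sub continuous_const).abs).tendsto t
      rw [sub_self, abs_zero] at h1
      exact h1.mono_left nhdsWithin_le_nhds
    · filter_upwards [self_mem_nhdsWithin] with τ (hτ : τ ≠ t)
      exact abs_pos.2 (sub_ne_zero.2 hτ)
  have hu := (hHt.comp habs).eventually_lt_const one_pos
  have hv := (hφt.comp habs).eventually_lt_const (by positivity : (0:ℝ) < ε/8)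
  filter_upwards [hF.filter_mono nhdsWithin_le_nhds, hu, hv, self_mem_nhdsWithin]
    with τ hFτ hu1 hv1 (hτ : τ ≠ t)
  simp only [Function.comp] at hu1 hv1
  set δ := |τ - t| with hδdef
  have hδ : 0 < δ := abs_pos.2 (sub_ne_zero.2 hτ)
  set u := ⨍ y in closedBall t δ, |H y - H t| with hudef
  set v := ⨍ y in closedBall t δ, |φ y - φ t| with hvdef
  -- integrabilities
  have hfI : IntervalIntegrable f volume t τ := by
    rw [intervalIntegrable_iff]
    exact (hf.integrableOn_isCompact isCompact_uIcc).mono_set uIoc_subset_uIcc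
  have hIsub : Ι t τ ⊆ closedBall t δ := by
    intro y hy
    have := Real.dist_le_of_mem_uIcc (uIoc_subset_uIcc hy) (left_mem_uIcc (a := t) (b := τ))
    simpa [Metric.mem_closedBall, Real.dist_eq, hδdef, abs_sub_comm] using this
  have hμI : volume (Ι t τ) < ⊤ := by
    rw [uIoc, Real.volume_Ioc]; exact ENNReal.ofReal_lt_top
  have hμcb : volume (closedBall t δ) < ⊤ := measure_closedBall_lt_top
  have hHcb : IntegrableOn H (closedBall t δ) volume :=
    hH.integrableOn_isCompact (isCompact_closedBall _ _)
  have hφcb : IntegrableOn φ (closedBall t δ) volume :=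
    hφloc.integrableOn_isCompact (isCompact_closedBall _ _)
  have hHI : IntegrableOn H (Ι t τ) volume := hHcb.mono_set hIsub
  have hφI : IntegrableOn φ (Ι t τ) volume := hφcb.mono_set hIsub
  have hfII : IntegrableOn f (Ι t τ) volume := by rwa [intervalIntegrable_iff] at hfI
  have hvolI : (volume (Ι t τ)).toReal ≤ δ := by
    rw [uIoc, Real.volume_Ioc, ENNReal.toReal_ofReal (by simp [sub_nonneg, min_le_max])]
    rw [hδdef]
    rcases le_total t τ with h | h
    · rw [max_eq_right h, min_eq_left h, abs_of_nonneg (sub_nonneg.2 h)]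
    · rw [max_eq_left h, min_eq_right h, abs_of_nonpos (sub_nonpos.2 h)]; linarith
  have hvolI0 : 0 ≤ (volume (Ι t τ)).toReal := ENNReal.toReal_nonneg
  have hvolcb : (volume (closedBall t δ)).toReal = 2 * δ := by
    rw [Real.volume_closedBall, ENNReal.toReal_ofReal (by positivity)]
  -- typed integrabilities
  have hIφabs : Integrable (fun y => |φ y - φ t|) (volume.restrict (Ι t τ)) :=
    (hφI.sub (integrableOn_const hμI.ne)).abs
  have hIHabs : Integrable (fun y => |H y - H t|) (volume.restrict (Ι t τ)) :=
    (hHI.sub (integrableOn_const hμI.ne)).abs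
  have hIfabs : Integrable (fun y => |f y - f t|) (volume.restrict (Ι t τ)) :=
    (hfII.sub (integrableOn_const hμI.ne)).abs
  have hIHmul : Integrable (fun y => ε' * H y) (volume.restrict (Ι t τ)) := hHI.const_mul ε'
  have hIconst : Integrable (fun _ : ℝ => ε' * H t) (volume.restrict (Ι t τ)) :=
    integrableOn_const hμI.ne
  have hIconstH : Integrable (fun _ : ℝ => H t) (volume.restrict (Ι t τ)) :=
    integrableOn_const hμI.ne
  have hIsum1 : Integrable (fun y => ε' * H y + |φ y - φ t|) (volume.restrict (Ι t τ)) :=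
    hIHmul.add hIφabs
  have hIsum2 : Integrable (fun y => ε' * H y + |φ y - φ t| + ε' * H t)
      (volume.restrict (Ι t τ)) := hIsum1.add hIconst
  have hIsumH : Integrable (fun y => |H y - H t| + H t) (volume.restrict (Ι t τ)) :=
    hIHabs.add hIconstH
  -- step 1 : slope identity
  have hslope : slope F t τ - f t = (∫ r in t..τ, (f r - f t)) / (τ - t) := by
    have hc : IntervalIntegrable (fun _ : ℝ => f t) volume t τ := intervalIntegrable_const
    have h1 : ∫ r in t..τ, (f r - f t) = (F τ - F t) - (τ - t) * f t := by
      rw [intervalIntegral.integral_sub hfI hc, intervalIntegral.integral_const, hFτ,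
        smul_eq_mul]
    have hτt : τ - t ≠ 0 := sub_ne_zero.2 hτ
    rw [h1, slope_def_field]
    field_simp
  -- step 2
  have est2 : ∫ y in Ι t τ, |f y - f t| ≤
      ε' * (∫ y in Ι t τ, H y) + (∫ y in Ι t τ, |φ y - φ t|) + δ * (ε' * H t) := by
    have hle : ∀ y, |f y - f t| ≤ ε' * H y + |φ y - φ t| + ε' * H t := by
      intro y
      have h1 : f y - f t = (f y - φ y) + (φ y - φ t) + (φ t - f t) := by ring
      calc |f y - f t| ≤ |f y - φ y| + |φ y - φ t| + |φ t - f t| := by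
            rw [h1]; exact (abs_add_le _ _).trans (by gcongr; exact abs_add_le _ _)
        _ ≤ ε' * H y + |φ y - φ t| + ε' * H t := by
            have h2 := hφb y
            have h3 : |φ t - f t| ≤ ε' * H t := by rw [abs_sub_comm]; exact hφb t
            gcongr
    calc ∫ y in Ι t τ, |f y - f t| ≤ ∫ y in Ι t τ, (ε' * H y + |φ y - φ t| + ε' * H t) :=
          integral_mono hIfabs hIsum2 hle
      _ = ε' * (∫ y in Ι t τ, H y) + (∫ y in Ι t τ, |φ y - φ t|)
            + (volume (Ι t τ)).toReal * (ε' * H t) := by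
          rw [integral_add hIsum1 hIconst, integral_add hIHmul hIφabs,
            MeasureTheory.integral_const_mul, setIntegral_const, smul_eq_mul, measureReal_def]
      _ ≤ _ := by gcongr
  -- averages
  have hHabs : IntegrableOn (fun y => |H y - H t|) (closedBall t δ) volume :=
    (hHcb.sub (integrableOn_const hμcb.ne)).abs
  have hφabs : IntegrableOn (fun y => |φ y - φ t|) (closedBall t δ) volume :=
    (hφcb.sub (integrableOn_const hμcb.ne)).abs
  have hcbu : ∫ y in closedBall t δ, |H y - H t| = 2 * δ * u := by
    rw [hudef, setAverage_eq, measureReal_def, hvolcb, smul_eq_mul]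
    field_simp
  have hcbv : ∫ y in closedBall t δ, |φ y - φ t| = 2 * δ * v := by
    rw [hvdef, setAverage_eq, measureReal_def, hvolcb, smul_eq_mul]
    field_simp
  -- step 3
  have est3 : ∫ y in Ι t τ, H y ≤ 2 * δ * u + δ * H t := by
    have h1 : ∫ y in Ι t τ, H y ≤ ∫ y in Ι t τ, (|H y - H t| + H t) := by
      refine integral_mono hHI hIsumH fun y => ?_
      have := le_abs_self (H y - H t)
      simp only
      linarith
    have h2 : ∫ y in Ι t τ, (|H y - H t| + H t)
        = (∫ y in Ι t τ, |H y - H t|) + (volume (Ι t τ)).toReal * H t := by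
      rw [integral_add hIHabs hIconstH, setIntegral_const, smul_eq_mul, measureReal_def]
    have h3 : ∫ y in Ι t τ, |H y - H t| ≤ ∫ y in closedBall t δ, |H y - H t| :=
      setIntegral_mono_set hHabs (Filter.Eventually.of_forall fun y => abs_nonneg _)
        (HasSubset.Subset.eventuallyLE hIsub)
    rw [hcbu] at h3
    have h4 : (volume (Ι t τ)).toReal * H t ≤ δ * H t := by gcongr
    linarith
  have est4 : ∫ y in Ι t τ, |φ y - φ t| ≤ 2 * δ * v := by
    have h3 : ∫ y in Ι t τ, |φ y - φ t| ≤ ∫ y in closedBall t δ, |φ y - φ t| :=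
      setIntegral_mono_set hφabs (Filter.Eventually.of_forall fun y => abs_nonneg _)
        (HasSubset.Subset.eventuallyLE hIsub)
    rwa [hcbv] at h3
  -- assemble
  have key : |slope F t τ - f t| ≤ 2*ε'*u + 2*ε'*(H t) + 2*v := by
    rw [hslope, abs_div, ← hδdef, div_le_iff₀ hδ]
    calc |∫ r in t..τ, (f r - f t)| ≤ ∫ y in Ι t τ, |f y - f t| := by
          simpa [Real.norm_eq_abs] using
            intervalIntegral.norm_integral_le_integral_norm_uIoc
              (f := fun r => f r - f t) (a := t) (b := τ) (μ := volume)
      _ ≤ ε' * (∫ y in Ι t τ, H y) + (∫ y in Ι t τ, |φ y - φ t|) + δ * (ε' * H t) := est2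
      _ ≤ ε' * (2 * δ * u + δ * H t) + 2 * δ * v + δ * (ε' * H t) := by gcongr
      _ = (2*ε'*u + 2*ε'*(H t) + 2*v) * δ := by ring
  rw [Real.dist_eq]
  have h2u : 2*ε'*u < 2*ε' := by
    have := mul_lt_mul_of_pos_left hu1 (by positivity : (0:ℝ) < 2*ε')
    calc 2*ε'*u = 2*ε'*(⨍ y in closedBall t δ, |H y - H t|) := by rw [hudef]
      _ < 2*ε'*1 := this
      _ = 2*ε' := by ring
  have h2v : 2*v < ε/4 := by
    have : v < ε/8 := by rw [hvdef]; exact hv1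
    linarith
  have hsum : 2*ε' + 2*ε'*(H t) + ε/4 ≤ ε := by nlinarith [h8, hε.le, hHt0]
  calc |slope F t τ - f t| ≤ 2*ε'*u + 2*ε'*(H t) + 2*v := key
    _ < 2*ε' + 2*ε'*(H t) + ε/4 := by linarith
    _ ≤ ε := hsum

end Core

set_option maxHeartbeats 1600000 in
set_option synthInstance.maxHeartbeats 400000 in
/-- Let `(μ_t)_{t>0}` be Borel probability measures on `ℝ^d`, Borel
measurable in `t`. Let `A : (0,∞)×ℝ^d → ℝ` and `B : (0,∞)×ℝ^d → ℝ^d` be Borel and locally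
Lebesgue integrable on `(0,∞)×ℝ^d`, and suppose the weak Fokker–Planck identity
`∫ζ dμ_t − ∫ζ dμ_s = ∫_s^t ∫ (A(r,x)·Δζ(x) + B(r,x)·∇ζ(x)) dx dr` holds for all
`0 < s < t` and `ζ ∈ C²_c(ℝ^d)`. Then there is a Lebesgue-null set `N ⊆ (0,∞)` such that
for all `t ∈ (0,∞)∖N` and `ζ ∈ C²_c(ℝ^d)`, `τ ↦ ∫ζ dμ_τ` is differentiable at `t` with
derivative `∫ (A(t,x)·Δζ(x) + B(t,x)·∇ζ(x)) dx`. -/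
theorem stmt_15 (d : ℕ)
    (μ : ℝ → Measure (EuclideanSpace ℝ (Fin d)))
    (hprob : ∀ t : ℝ, 0 < t → IsProbabilityMeasure (μ t))
    (hμ_meas : ∀ A : Set (EuclideanSpace ℝ (Fin d)), MeasurableSet A →
      Measurable fun t => μ t A)
    (A : ℝ → EuclideanSpace ℝ (Fin d) → ℝ)
    (B : ℝ → EuclideanSpace ℝ (Fin d) → EuclideanSpace ℝ (Fin d))
    (hA_meas : Measurable (Function.uncurry A))
    (hB_meas : Measurable (Function.uncurry B))
    (hA_loc : LocallyIntegrableOn (fun p : ℝ × EuclideanSpace ℝ (Fin d) => A p.1 p.2)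
      (Ioi (0 : ℝ) ×ˢ univ) volume)
    (hB_loc : LocallyIntegrableOn (fun p : ℝ × EuclideanSpace ℝ (Fin d) => ‖B p.1 p.2‖)
      (Ioi (0 : ℝ) ×ˢ univ) volume)
    (hFPK : ∀ s t : ℝ, 0 < s → s < t →
      ∀ ζ : EuclideanSpace ℝ (Fin d) → ℝ, ContDiff ℝ 2 ζ → HasCompactSupport ζ →
        (∫ x, ζ x ∂(μ t)) - (∫ x, ζ x ∂(μ s)) =
          ∫ r in s..t, ∫ x, (A r x * lapl ζ x + fderiv ℝ ζ x (B r x))) :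
    ∃ N : Set ℝ, N ⊆ Ioi 0 ∧ volume N = 0 ∧
      ∀ t : ℝ, 0 < t → t ∉ N →
        ∀ ζ : EuclideanSpace ℝ (Fin d) → ℝ, ContDiff ℝ 2 ζ → HasCompactSupport ζ →
          HasDerivAt (fun τ : ℝ => ∫ x, ζ x ∂(μ τ))
            (∫ x, (A t x * lapl ζ x + fderiv ℝ ζ x (B t x))) t := by
  classical
  -- countable dense families
  have hDex : ∀ k : ℕ, ∃ D : Set C(KK d k, ℝ × (EuclideanSpace ℝ (Fin d) →L[ℝ] ℝ)),
      D.Countable ∧ Dense D := by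
    intro k
    haveI : CompactSpace (KK d k) := isCompact_iff_compactSpace.mp (isCompact_closedBall _ _)
    exact TopologicalSpace.exists_countable_dense _
  choose D hDc hDd using hDex
  -- extended test functions
  let pe : ∀ k : ℕ, C(KK d k, ℝ × (EuclideanSpace ℝ (Fin d) →L[ℝ] ℝ)) →
      EuclideanSpace ℝ (Fin d) → ℝ × (EuclideanSpace ℝ (Fin d) →L[ℝ] ℝ) :=
    fun k p x => if h : x ∈ KK d k then p ⟨x, h⟩ else 0
  have hpe_meas : ∀ k p, Measurable (pe k p) := by
    intro k p
    exact Measurable.dite p.continuous.measurable measurable_const measurableSet_closedBall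
  have hpe_bd : ∀ k p x, ‖pe k p x‖ ≤ ‖p‖ := by
    intro k p x
    by_cases h : x ∈ KK d k
    · have he : pe k p x = p ⟨x, h⟩ := dif_pos h
      rw [he]
      exact p.norm_coe_le_norm _
    · have he : pe k p x = 0 := dif_neg h
      rw [he]
      simp only [norm_zero]
      exact norm_nonneg p
  -- weight function
  let W : ℝ → EuclideanSpace ℝ (Fin d) → ℝ := fun r x => |A r x| + ‖B r x‖
  have hW_meas : Measurable (fun z : ℝ × EuclideanSpace ℝ (Fin d) => W z.1 z.2) := by
    exact (hA_meas.abs).add hB_meas.norm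
  have hW_nonneg : ∀ r x, 0 ≤ W r x := fun r x => by positivity
  -- good sets
  let Gs : ℚ → ℕ → Set ℝ := fun q k =>
    {r : ℝ | (q:ℝ) < r} ∩ {r : ℝ | IntegrableOn (W r) (KK d k) volume}
  have hGmeas : ∀ (q : ℚ) (k : ℕ), MeasurableSet (Gs q k) := by
    intro q k
    exact measurableSet_Ioi.inter
      (measurableSet_integrable (f := W) hW_meas.stronglyMeasurable)
  have hGq : ∀ (q : ℚ) (k : ℕ), Gs q k ⊆ Ioi (q:ℝ) := fun q k r hr => hr.1
  -- product integrability
  have hprodInt : ∀ (q : ℚ) (b : ℝ) (k : ℕ), 0 < (q:ℝ) →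
      Integrable (fun p : ℝ × EuclideanSpace ℝ (Fin d) => W p.1 p.2)
        ((volume.restrict (Icc (q:ℝ) b)).prod (volume.restrict (KK d k))) := by
    intro q b k hq
    rw [Measure.prod_restrict, ← Measure.volume_eq_prod]
    have hsub : Icc (q:ℝ) b ×ˢ KK d k ⊆ Ioi (0:ℝ) ×ˢ univ :=
      prod_mono (fun r hr => lt_of_lt_of_le hq hr.1) (subset_univ _)
    have hcomp : IsCompact (Icc (q:ℝ) b ×ˢ KK d k) :=
      isCompact_Icc.prod (isCompact_closedBall _ _)
    exact ((hA_loc.integrableOn_compact_subset hsub hcomp).abs.add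
      (hB_loc.integrableOn_compact_subset hsub hcomp) : _)
  -- slice integral functions
  have hHsm : ∀ k : ℕ, StronglyMeasurable (fun r : ℝ => ∫ x in KK d k, W r x) := by
    intro k
    exact hW_meas.stronglyMeasurable.integral_prod_right'
  have hHIcc : ∀ (q : ℚ) (b : ℝ) (k : ℕ), 0 < (q:ℝ) →
      IntegrableOn (fun r : ℝ => ∫ x in KK d k, W r x) (Icc (q:ℝ) b) volume := by
    intro q b k hq
    have h2 := (hprodInt q b k hq).integral_norm_prod_left
    refine h2.congr (Filter.Eventually.of_forall fun r => ?_)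
    refine integral_congr_ae (Filter.Eventually.of_forall fun x => ?_)
    exact norm_of_nonneg (hW_nonneg r x)
  -- H functions
  let Hf : ℚ → ℕ → ℝ → ℝ := fun q k => (Gs q k).indicator (fun r => ∫ x in KK d k, W r x)
  have hHf_eq : ∀ (q : ℚ) (k : ℕ) (r : ℝ), Hf q k r =
      (Gs q k).indicator (fun r => ∫ x in KK d k, W r x) r := fun _ _ _ => rfl
  have hHf_nonneg : ∀ (q : ℚ) (k : ℕ) (r : ℝ), 0 ≤ Hf q k r := by
    intro q k r
    apply Set.indicator_nonneg
    intro r _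
    exact integral_nonneg fun x => hW_nonneg r x
  have hHloc : ∀ (q : ℚ) (k : ℕ), 0 < (q:ℝ) → LocallyIntegrable (Hf q k) volume := by
    intro q k hq
    refine aux_locint (hGmeas q k) (hHsm k).aestronglyMeasurable (hGq q k)
      (fun b => hHIcc q b k hq) (fun r _ => ?_)
    rw [abs_of_nonneg (integral_nonneg fun x => hW_nonneg r x)]
  -- bad sets
  let badH : ℚ → ℕ → Set ℝ := fun q k =>
    {t | ¬ Filter.Tendsto (fun δ => ⨍ y in closedBall t δ, |Hf q k y - Hf q k t|)
      (𝓝[>] (0:ℝ)) (𝓝 0)}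
  have hbadH : ∀ (q : ℚ) (k : ℕ), 0 < (q:ℝ) → volume (badH q k) = 0 := by
    intro q k hq
    have h := lebesguePoints (Hf q k) (hHloc q k hq)
    rwa [ae_iff] at h
  let badS : ℚ → ℕ → Set ℝ := fun q k => Ioi (q:ℝ) \ Gs q k
  have hbadS : ∀ (q : ℚ) (k : ℕ), 0 < (q:ℝ) → volume (badS q k) = 0 := by
    intro q k hq
    have hcover : badS q k ⊆ ⋃ n : ℕ, (badS q k ∩ Icc (q:ℝ) ((q:ℝ) + n)) := by
      intro r hr
      obtain ⟨n, hn⟩ := exists_nat_ge (r - (q:ℝ))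
      exact mem_iUnion.2 ⟨n, hr, le_of_lt hr.1, by linarith⟩
    refine measure_mono_null hcover (measure_iUnion_null fun n => ?_)
    have h1 := (hprodInt q ((q:ℝ) + n) k hq).prod_right_ae
    rw [ae_iff] at h1
    have h2 : badS q k ∩ Icc (q:ℝ) ((q:ℝ) + n) ⊆
        {r | ¬ Integrable (fun x => W r x) (volume.restrict (KK d k))} ∩ Icc (q:ℝ) ((q:ℝ) + n) := by
      rintro r ⟨⟨hrq, hrG⟩, hrI⟩
      refine ⟨fun hint => hrG ⟨hrq, hint⟩, hrI⟩
    refine measure_mono_null h2 ?_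
    have h3 : MeasurableSet {r : ℝ | ¬ Integrable (fun x => W r x) (volume.restrict (KK d k))} :=
      (measurableSet_integrable (f := W) hW_meas.stronglyMeasurable).compl
    rw [← Measure.restrict_apply_eq_zero' measurableSet_Icc] at *
    · rw [Measure.restrict_apply h3]
      rw [Measure.restrict_apply h3] at h1
      exact h1
  -- φ functions
  let φcore : (k : ℕ) → C(KK d k, ℝ × (EuclideanSpace ℝ (Fin d) →L[ℝ] ℝ)) → ℝ → ℝ :=
    fun k p r => ∫ x in KK d k, (A r x * (pe k p x).1 + (pe k p x).2 (B r x))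
  have hφsm : ∀ k p, StronglyMeasurable (φcore k p) := by
    intro k p
    apply StronglyMeasurable.integral_prod_right'
      (f := fun z : ℝ × EuclideanSpace ℝ (Fin d) =>
        A z.1 z.2 * (pe k p z.2).1 + (pe k p z.2).2 (B z.1 z.2))
    apply Measurable.stronglyMeasurable
    have hm1 : Measurable fun z : ℝ × EuclideanSpace ℝ (Fin d) => A z.1 z.2 * (pe k p z.2).1 :=
      hA_meas.mul (measurable_fst.comp ((hpe_meas k p).comp measurable_snd))
    have hm2 : Measurable fun z : ℝ × EuclideanSpace ℝ (Fin d) => (pe k p z.2).2 (B z.1 z.2) := by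
      have hpair : Measurable fun z : ℝ × EuclideanSpace ℝ (Fin d) =>
          ((pe k p z.2).2, B z.1 z.2) :=
        (measurable_snd.comp ((hpe_meas k p).comp measurable_snd)).prodMk hB_meas
      exact (isBoundedBilinearMap_apply.continuous.measurable).comp hpair
    exact hm1.add hm2
  have hφbd : ∀ k p r x, |A r x * (pe k p x).1 + (pe k p x).2 (B r x)| ≤ ‖p‖ * W r x := by
    intro k p r x
    have h1 : |A r x * (pe k p x).1| ≤ |A r x| * ‖p‖ := by
      rw [abs_mul]
      have : |(pe k p x).1| ≤ ‖p‖ := (norm_fst_le (pe k p x)).trans (hpe_bd k p x)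
      exact mul_le_mul_of_nonneg_left this (abs_nonneg _)
    have h2 : |(pe k p x).2 (B r x)| ≤ ‖p‖ * ‖B r x‖ := by
      calc |(pe k p x).2 (B r x)| ≤ ‖(pe k p x).2‖ * ‖B r x‖ :=
            (pe k p x).2.le_opNorm (B r x)
        _ ≤ ‖p‖ * ‖B r x‖ :=
            mul_le_mul_of_nonneg_right ((norm_snd_le (pe k p x)).trans (hpe_bd k p x))
              (norm_nonneg _)
    calc |A r x * (pe k p x).1 + (pe k p x).2 (B r x)|
        ≤ |A r x * (pe k p x).1| + |(pe k p x).2 (B r x)| := abs_add_le _ _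
      _ ≤ |A r x| * ‖p‖ + ‖p‖ * ‖B r x‖ := add_le_add h1 h2
      _ = ‖p‖ * W r x := by simp only [W]; ring
  have hφcore_bd : ∀ (q : ℚ) (k : ℕ) p r, r ∈ Gs q k → |φcore k p r| ≤ ‖p‖ * (∫ x in KK d k, W r x) := by
    intro q k p r hr
    calc |φcore k p r| ≤ ∫ x in KK d k, |A r x * (pe k p x).1 + (pe k p x).2 (B r x)| := by
          simpa [Real.norm_eq_abs] using norm_integral_le_integral_norm
            (μ := volume.restrict (KK d k))
            (f := fun x => A r x * (pe k p x).1 + (pe k p x).2 (B r x))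
      _ ≤ ∫ x in KK d k, ‖p‖ * W r x := by
          refine integral_mono_of_nonneg (Filter.Eventually.of_forall fun x => abs_nonneg _)
            (hr.2.const_mul ‖p‖) (Filter.Eventually.of_forall fun x => hφbd k p r x)
      _ = ‖p‖ * (∫ x in KK d k, W r x) := MeasureTheory.integral_const_mul _ _
  let φf : (q : ℚ) → (k : ℕ) → C(KK d k, ℝ × (EuclideanSpace ℝ (Fin d) →L[ℝ] ℝ)) → ℝ → ℝ :=
    fun q k p => (Gs q k).indicator (φcore k p)
  have hφf_eq : ∀ (q : ℚ) (k : ℕ) p (r : ℝ), φf q k p r = (Gs q k).indicator (φcore k p) r :=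
    fun _ _ _ _ => rfl
  have hφloc : ∀ (q : ℚ) (k : ℕ) p, 0 < (q:ℝ) → LocallyIntegrable (φf q k p) volume := by
    intro q k p hq
    refine aux_locint (hGmeas q k) (hφsm k p).aestronglyMeasurable (hGq q k)
      (fun b => ((hHIcc q b k hq).const_mul ‖p‖ : _)) (fun r hr => hφcore_bd q k p r hr)
  let badφ : (q : ℚ) → (k : ℕ) → C(KK d k, ℝ × (EuclideanSpace ℝ (Fin d) →L[ℝ] ℝ)) → Set ℝ :=
    fun q k p => {t | ¬ Filter.Tendsto (fun δ => ⨍ y in closedBall t δ, |φf q k p y - φf q k p t|)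
      (𝓝[>] (0:ℝ)) (𝓝 0)}
  have hbadφ : ∀ (q : ℚ) (k : ℕ) p, 0 < (q:ℝ) → volume (badφ q k p) = 0 := by
    intro q k p hq
    have h := lebesguePoints (φf q k p) (hφloc q k p hq)
    rwa [ae_iff] at h
  -- the null set
  let N : Set ℝ :=
    (⋃ q : {q : ℚ // 0 < (q:ℝ)}, ⋃ k : ℕ,
      (badS q.1 k ∪ badH q.1 k ∪ ⋃ p ∈ D k, badφ q.1 k p)) ∩ Ioi 0
  refine ⟨N, inter_subset_right, ?_, ?_⟩
  · refine measure_mono_null inter_subset_left (measure_iUnion_null fun q =>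
      measure_iUnion_null fun k => ?_)
    refine measure_union_null (measure_union_null (hbadS q.1 k q.2) (hbadH q.1 k q.2)) ?_
    exact (measure_biUnion_null_iff (hDc k)).2 fun p _ => hbadφ q.1 k p q.2
  intro t ht htN ζ hζ2 hζc
  -- choose k and q
  obtain ⟨R, hR⟩ := hζc.isBounded.subset_closedBall 0
  set k : ℕ := ⌈R⌉₊ with hk
  have hsupp : tsupport ζ ⊆ KK d k :=
    hR.trans (closedBall_subset_closedBall (Nat.le_ceil R))
  obtain ⟨q, hq0, hqt⟩ := exists_rat_btwn ht
  have hq0' : 0 < (q:ℝ) := hq0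
  have hnotbad : t ∉ badS q k ∪ badH q k ∪ ⋃ p ∈ D k, badφ q k p := by
    intro hmem
    exact htN ⟨mem_iUnion.2 ⟨⟨q, hq0'⟩, mem_iUnion.2 ⟨k, hmem⟩⟩, ht⟩
  have htG : t ∈ Gs q k := by
    by_contra hcon
    exact hnotbad (Or.inl (Or.inl ⟨hqt, hcon⟩))
  -- target continuous map and bounds
  let T : C(KK d k, ℝ × (EuclideanSpace ℝ (Fin d) →L[ℝ] ℝ)) :=
    ⟨fun x => (lapl ζ x.1, fderiv ℝ ζ x.1),
      ((lapl_continuous hζ2).comp continuous_subtype_val).prodMk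
        ((hζ2.continuous_fderiv (by norm_num)).comp continuous_subtype_val)⟩
  have hTbd : ∀ x : EuclideanSpace ℝ (Fin d), |lapl ζ x| ≤ ‖T‖ ∧ ‖fderiv ℝ ζ x‖ ≤ ‖T‖ := by
    intro x
    by_cases hx : x ∈ KK d k
    · constructor
      · exact (norm_fst_le (T ⟨x, hx⟩)).trans (T.norm_coe_le_norm ⟨x, hx⟩)
      · exact (norm_snd_le (T ⟨x, hx⟩)).trans (T.norm_coe_le_norm ⟨x, hx⟩)
    · have hx' : x ∉ tsupport ζ := fun h => hx (hsupp h)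
      rw [lapl_zero_of_nmem hx', fderiv_zero_of_nmem hx']
      constructor
      · rw [abs_zero]; exact norm_nonneg T
      · rw [norm_zero]; exact norm_nonneg T
  -- the density g and its localization
  set g : ℝ → ℝ := fun r => ∫ x, (A r x * lapl ζ x + fderiv ℝ ζ x (B r x)) with hgdef
  have hgK : ∀ r, g r = ∫ x in KK d k, (A r x * lapl ζ x + fderiv ℝ ζ x (B r x)) := by
    intro r
    refine (setIntegral_eq_integral_of_forall_compl_eq_zero fun x hx => ?_).symm
    have hx' : x ∉ tsupport ζ := fun h => hx (hsupp h)
    rw [lapl_zero_of_nmem hx', fderiv_zero_of_nmem hx']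
    simp
  have hgbd : ∀ r x, |A r x * lapl ζ x + fderiv ℝ ζ x (B r x)| ≤ ‖T‖ * W r x := by
    intro r x
    calc |A r x * lapl ζ x + fderiv ℝ ζ x (B r x)|
        ≤ |A r x * lapl ζ x| + |fderiv ℝ ζ x (B r x)| := abs_add_le _ _
      _ ≤ |A r x| * ‖T‖ + ‖T‖ * ‖B r x‖ := by
          refine add_le_add ?_ ?_
          · rw [abs_mul]
            exact mul_le_mul_of_nonneg_left (hTbd x).1 (abs_nonneg _)
          · calc |fderiv ℝ ζ x (B r x)| ≤ ‖fderiv ℝ ζ x‖ * ‖B r x‖ :=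
                (fderiv ℝ ζ x).le_opNorm (B r x)
              _ ≤ ‖T‖ * ‖B r x‖ :=
                mul_le_mul_of_nonneg_right (hTbd x).2 (norm_nonneg _)
      _ = ‖T‖ * W r x := by simp only [W]; ring
  have hg_sm : StronglyMeasurable g := by
    apply StronglyMeasurable.integral_prod_right'
      (f := fun z : ℝ × EuclideanSpace ℝ (Fin d) =>
        A z.1 z.2 * lapl ζ z.2 + fderiv ℝ ζ z.2 (B z.1 z.2))
    apply Measurable.stronglyMeasurable
    have hm1 : Measurable fun z : ℝ × EuclideanSpace ℝ (Fin d) => A z.1 z.2 * lapl ζ z.2 :=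
      hA_meas.mul (((lapl_continuous hζ2).measurable).comp measurable_snd)
    have hm2 : Measurable fun z : ℝ × EuclideanSpace ℝ (Fin d) =>
        fderiv ℝ ζ z.2 (B z.1 z.2) := by
      have hpair : Measurable fun z : ℝ × EuclideanSpace ℝ (Fin d) =>
          (fderiv ℝ ζ z.2, B z.1 z.2) :=
        (((hζ2.continuous_fderiv (by norm_num)).measurable).comp measurable_snd).prodMk hB_meas
      exact (isBoundedBilinearMap_apply.continuous.measurable).comp hpair
    exact hm1.add hm2
  have hmeasg : ∀ r : ℝ, Measurable (fun x : EuclideanSpace ℝ (Fin d) =>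
      A r x * lapl ζ x + fderiv ℝ ζ x (B r x)) := by
    intro r
    have hAr : Measurable (fun x : EuclideanSpace ℝ (Fin d) => A r x) :=
      hA_meas.comp (measurable_const.prodMk measurable_id)
    have hBr : Measurable (fun x : EuclideanSpace ℝ (Fin d) => B r x) :=
      hB_meas.comp (measurable_const.prodMk measurable_id)
    have hm1 : Measurable (fun x : EuclideanSpace ℝ (Fin d) => A r x * lapl ζ x) :=
      hAr.mul (lapl_continuous hζ2).measurable
    have hm2 : Measurable (fun x : EuclideanSpace ℝ (Fin d) => fderiv ℝ ζ x (B r x)) := by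
      have hpair : Measurable (fun x : EuclideanSpace ℝ (Fin d) => (fderiv ℝ ζ x, B r x)) :=
        ((hζ2.continuous_fderiv (by norm_num)).measurable).prodMk hBr
      exact (isBoundedBilinearMap_apply.continuous.measurable).comp hpair
    exact hm1.add hm2
  have hmeasφ : ∀ (p : C(KK d k, ℝ × (EuclideanSpace ℝ (Fin d) →L[ℝ] ℝ))) (r : ℝ),
      Measurable (fun x : EuclideanSpace ℝ (Fin d) =>
        A r x * (pe k p x).1 + (pe k p x).2 (B r x)) := by
    intro p r
    have hAr : Measurable (fun x : EuclideanSpace ℝ (Fin d) => A r x) :=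
      hA_meas.comp (measurable_const.prodMk measurable_id)
    have hBr : Measurable (fun x : EuclideanSpace ℝ (Fin d) => B r x) :=
      hB_meas.comp (measurable_const.prodMk measurable_id)
    have hm1 : Measurable (fun x : EuclideanSpace ℝ (Fin d) => A r x * (pe k p x).1) :=
      hAr.mul (measurable_fst.comp (hpe_meas k p))
    have hm2 : Measurable (fun x : EuclideanSpace ℝ (Fin d) => (pe k p x).2 (B r x)) := by
      have hpair : Measurable (fun x : EuclideanSpace ℝ (Fin d) => ((pe k p x).2, B r x)) :=
        (measurable_snd.comp (hpe_meas k p)).prodMk hBr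
      exact (isBoundedBilinearMap_apply.continuous.measurable).comp hpair
    exact hm1.add hm2
  have hgGbd : ∀ r ∈ Gs q k, |g r| ≤ ‖T‖ * (∫ x in KK d k, W r x) := by
    intro r hr
    rw [hgK r]
    calc |∫ x in KK d k, (A r x * lapl ζ x + fderiv ℝ ζ x (B r x))|
        ≤ ∫ x in KK d k, |A r x * lapl ζ x + fderiv ℝ ζ x (B r x)| := by
          simpa [Real.norm_eq_abs] using norm_integral_le_integral_norm
            (μ := volume.restrict (KK d k))
            (f := fun x => A r x * lapl ζ x + fderiv ℝ ζ x (B r x))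
      _ ≤ ∫ x in KK d k, ‖T‖ * W r x :=
          integral_mono_of_nonneg (Filter.Eventually.of_forall fun x => abs_nonneg _)
            (hr.2.const_mul ‖T‖) (Filter.Eventually.of_forall fun x => hgbd r x)
      _ = ‖T‖ * (∫ x in KK d k, W r x) := MeasureTheory.integral_const_mul _ _
  set f : ℝ → ℝ := (Gs q k).indicator g with hfdef
  have hfloc : LocallyIntegrable f volume :=
    aux_locint (hGmeas q k) hg_sm.aestronglyMeasurable (hGq q k)
      (fun b => ((hHIcc q b k hq0').const_mul ‖T‖ : _)) hgGbd
  -- FTC hypothesis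
  have hFev : ∀ᶠ τ in 𝓝 t, (∫ x, ζ x ∂(μ τ)) - (∫ x, ζ x ∂(μ t)) = ∫ r in t..τ, f r := by
    filter_upwards [isOpen_Ioi.mem_nhds hqt] with τ (hτ : (q:ℝ) < τ)
    have h0τ : 0 < τ := lt_trans hq0' hτ
    have hFg : (∫ x, ζ x ∂(μ τ)) - (∫ x, ζ x ∂(μ t)) = ∫ r in t..τ, g r := by
      rcases lt_trichotomy t τ with hlt | heq | hgt
      · exact hFPK t τ ht hlt ζ hζ2 hζc
      · rw [heq]; simp
      · have h := hFPK τ t h0τ hgt ζ hζ2 hζc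
        rw [intervalIntegral.integral_symm]
        linarith
    rw [hFg]
    refine intervalIntegral.integral_congr_ae ?_
    have : ∀ᵐ r : ℝ, r ∉ badS q k := measure_eq_zero_iff_ae_notMem.1 (hbadS q k hq0')
    filter_upwards [this] with r hr hrI
    have hrq : (q:ℝ) < r := by
      rcases mem_uIoc.1 hrI with h | h
      · exact lt_trans hqt h.1
      · exact lt_trans hτ h.1
    have hrG : r ∈ Gs q k := by
      by_contra hcon
      exact hr ⟨hrq, hcon⟩
    rw [hfdef, indicator_of_mem hrG]
  -- apply core
  have hHt : Filter.Tendsto (fun δ => ⨍ y in closedBall t δ, |Hf q k y - Hf q k t|)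
      (𝓝[>] (0:ℝ)) (𝓝 0) := by
    by_contra hcon
    exact hnotbad (Or.inl (Or.inr hcon))
  have happ : ∀ ε : ℝ, 0 < ε → ∃ φ : ℝ → ℝ, LocallyIntegrable φ volume ∧
      (∀ r, |f r - φ r| ≤ ε * Hf q k r) ∧
      Filter.Tendsto (fun δ => ⨍ y in closedBall t δ, |φ y - φ t|) (𝓝[>] (0:ℝ)) (𝓝 0) := by
    intro ε hε
    obtain ⟨p, hpD, hpd⟩ := (hDd k).exists_dist_lt T hε
    refine ⟨φf q k p, hφloc q k p hq0', ?_, ?_⟩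
    · intro r
      by_cases hr : r ∈ Gs q k
      · rw [hfdef, hφf_eq, hHf_eq, indicator_of_mem hr, indicator_of_mem hr,
          indicator_of_mem hr, hgK r]
        -- integrability of the two integrands
        have hint1 : IntegrableOn (fun x => A r x * lapl ζ x + fderiv ℝ ζ x (B r x))
            (KK d k) volume := by
          refine Integrable.mono (hr.2.const_mul ‖T‖)
            ((hmeasg r).aestronglyMeasurable.restrict)
            (Filter.Eventually.of_forall fun x => ?_)
          simp only [Real.norm_eq_abs]
          exact (hgbd r x).trans (le_abs_self _)
        have hint2 : IntegrableOn (fun x => A r x * (pe k p x).1 + (pe k p x).2 (B r x))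
            (KK d k) volume := by
          refine Integrable.mono (hr.2.const_mul ‖p‖)
            ((hmeasφ p r).aestronglyMeasurable.restrict)
            (Filter.Eventually.of_forall fun x => ?_)
          simp only [Real.norm_eq_abs]
          exact (hφbd k p r x).trans (le_abs_self _)
        rw [← integral_sub hint1 hint2]
        have heq : ∀ x, (A r x * lapl ζ x + fderiv ℝ ζ x (B r x))
            - (A r x * (pe k p x).1 + (pe k p x).2 (B r x))
            = A r x * (lapl ζ x - (pe k p x).1) + (fderiv ℝ ζ x - (pe k p x).2) (B r x) := by
          intro x
          simp only [ContinuousLinearMap.sub_apply]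
          ring
        have hptbd : ∀ x ∈ KK d k, |A r x * (lapl ζ x - (pe k p x).1)
            + (fderiv ℝ ζ x - (pe k p x).2) (B r x)| ≤ ε * W r x := by
          intro x hx
          have hd1 : |lapl ζ x - (pe k p x).1| ≤ ε := by
            have h1 : pe k p x = p ⟨x, hx⟩ := dif_pos hx
            have h2 : lapl ζ x = (T ⟨x, hx⟩).1 := rfl
            rw [h1, h2]
            calc |(T ⟨x, hx⟩).1 - (p ⟨x, hx⟩).1| = dist (T ⟨x, hx⟩).1 (p ⟨x, hx⟩).1 :=
                  (Real.dist_eq _ _).symm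
              _ ≤ dist (T ⟨x, hx⟩) (p ⟨x, hx⟩) := by rw [Prod.dist_eq]; exact le_max_left _ _
              _ ≤ dist T p := T.dist_apply_le_dist _
              _ ≤ ε := le_of_lt hpd
          have hd2 : ‖fderiv ℝ ζ x - (pe k p x).2‖ ≤ ε := by
            have h1 : pe k p x = p ⟨x, hx⟩ := dif_pos hx
            have h2 : fderiv ℝ ζ x = (T ⟨x, hx⟩).2 := rfl
            rw [h1, h2]
            calc ‖(T ⟨x, hx⟩).2 - (p ⟨x, hx⟩).2‖ = dist (T ⟨x, hx⟩).2 (p ⟨x, hx⟩).2 :=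
                  (dist_eq_norm _ _).symm
              _ ≤ dist (T ⟨x, hx⟩) (p ⟨x, hx⟩) := by rw [Prod.dist_eq]; exact le_max_right _ _
              _ ≤ dist T p := T.dist_apply_le_dist _
              _ ≤ ε := le_of_lt hpd
          calc |A r x * (lapl ζ x - (pe k p x).1) + (fderiv ℝ ζ x - (pe k p x).2) (B r x)|
              ≤ |A r x * (lapl ζ x - (pe k p x).1)|
                + |(fderiv ℝ ζ x - (pe k p x).2) (B r x)| := abs_add_le _ _
            _ ≤ |A r x| * ε + ε * ‖B r x‖ := by
                refine add_le_add ?_ ?_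
                · rw [abs_mul]
                  exact mul_le_mul_of_nonneg_left hd1 (abs_nonneg _)
                · calc |(fderiv ℝ ζ x - (pe k p x).2) (B r x)|
                      ≤ ‖fderiv ℝ ζ x - (pe k p x).2‖ * ‖B r x‖ :=
                        (fderiv ℝ ζ x - (pe k p x).2).le_opNorm (B r x)
                    _ ≤ ε * ‖B r x‖ := mul_le_mul_of_nonneg_right hd2 (norm_nonneg _)
            _ = ε * W r x := by simp only [W]; ring
        calc |∫ x in KK d k, ((A r x * lapl ζ x + fderiv ℝ ζ x (B r x))
              - (A r x * (pe k p x).1 + (pe k p x).2 (B r x)))|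
            ≤ ∫ x in KK d k, |(A r x * lapl ζ x + fderiv ℝ ζ x (B r x))
              - (A r x * (pe k p x).1 + (pe k p x).2 (B r x))| := by
              simpa [Real.norm_eq_abs] using norm_integral_le_integral_norm
                (μ := volume.restrict (KK d k))
                (f := fun x => (A r x * lapl ζ x + fderiv ℝ ζ x (B r x))
                  - (A r x * (pe k p x).1 + (pe k p x).2 (B r x)))
          _ ≤ ∫ x in KK d k, ε * W r x := by
              refine integral_mono_of_nonneg (Filter.Eventually.of_forall fun x => abs_nonneg _)
                (hr.2.const_mul ε) ?_
              refine (ae_restrict_iff' measurableSet_closedBall).2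
                (Filter.Eventually.of_forall fun x hx => ?_)
              show |A r x * lapl ζ x + (fderiv ℝ ζ x) (B r x)
                - (A r x * (pe k p x).1 + (pe k p x).2 (B r x))| ≤ ε * W r x
              rw [heq x]
              exact hptbd x hx
          _ = ε * (∫ x in KK d k, W r x) := MeasureTheory.integral_const_mul _ _
      · rw [hfdef, hφf_eq, hHf_eq, indicator_of_notMem hr, indicator_of_notMem hr,
          indicator_of_notMem hr]
        simp
    · have htp : t ∉ badφ q k p := by
        intro hmem
        exact hnotbad (Or.inr (mem_biUnion hpD hmem))
      exact not_not.1 htp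
  have hres := core f (fun τ : ℝ => ∫ x, ζ x ∂(μ τ)) (Hf q k) t hfloc (hHloc q k hq0')
    hFev hHt happ
  have hft : f t = g t := indicator_of_mem htG g
  rw [hft] at hres
  exact hres
end

section
/- Let Φ ∈ L¹_loc(ℝ^d), let v: ℝ^d → [0,∞) be bounded and measurable with x ↦ Φ(x)v(x) Lebesgue-integrable, and let φ: ℝ^d → ℝ^d be continuously differentiable with compact support and Lipschitz constant L, and let τ ∈ ℝ with |τ|·L < 1. Then the function x ↦ Φ(x + τφ(x))·v(x) is Lebesgue-integrable on ℝ^d. -/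
open MeasureTheory Real Set

/-- Let `Φ ∈ L¹_loc(ℝ^d)`, let `v : ℝ^d → [0,∞)` be bounded and
measurable with `Φ·v` Lebesgue integrable, and let `φ : ℝ^d → ℝ^d` be continuously
differentiable with compact support and Lipschitz constant `L`, and `τ ∈ ℝ` with
`|τ|·L < 1`. Then `x ↦ Φ(x + τφ(x))·v(x)` is Lebesgue integrable on `ℝ^d`. -/
theorem stmt_17 (d : ℕ)
    (Φ : EuclideanSpace ℝ (Fin d) → ℝ)
    (hΦ_meas : Measurable Φ)
    (hΦ_loc : LocallyIntegrable Φ volume)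
    (v : EuclideanSpace ℝ (Fin d) → ℝ)
    (hv_meas : Measurable v) (hv_nonneg : ∀ x, 0 ≤ v x)
    (hv_bdd : ∃ M : ℝ, ∀ x, v x ≤ M)
    (hΦv_int : Integrable (fun x => Φ x * v x) volume)
    (φ : EuclideanSpace ℝ (Fin d) → EuclideanSpace ℝ (Fin d))
    (hφ : ContDiff ℝ 1 φ) (hφc : HasCompactSupport φ)
    (L : ℝ) (hLip : ∀ x y, ‖φ x - φ y‖ ≤ L * ‖x - y‖)
    (τ : ℝ) (hτ : |τ| * L < 1) :
    Integrable (fun x => Φ (x + τ • φ x) * v x) volume := by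
  classical
  obtain ⟨M, hM⟩ := hv_bdd
  set L' : ℝ := max L 0 with hL'def
  have hL'0 : 0 ≤ L' := le_max_right _ _
  have hτL' : |τ| * L' < 1 := by
    rcases max_cases L 0 with ⟨h1, h2⟩ | ⟨h1, h2⟩
    · rw [hL'def, h1]; exact hτ
    · rw [hL'def, h1, mul_zero]; norm_num
  have hLip' : ∀ x y : EuclideanSpace ℝ (Fin d), ‖φ x - φ y‖ ≤ L' * ‖x - y‖ := by
    intro x y
    calc ‖φ x - φ y‖ ≤ L * ‖x - y‖ := hLip x y
      _ ≤ L' * ‖x - y‖ :=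
        mul_le_mul_of_nonneg_right (le_max_left _ _) (norm_nonneg _)
  have hlipW : LipschitzWith L'.toNNReal φ := by
    apply LipschitzWith.of_dist_le_mul
    intro x y
    rw [dist_eq_norm, dist_eq_norm, Real.coe_toNNReal _ hL'0]
    exact hLip' x y
  have hφd : Differentiable ℝ φ := hφ.differentiable one_ne_zero
  set T : EuclideanSpace ℝ (Fin d) → EuclideanSpace ℝ (Fin d) :=
    fun x => x + τ • φ x with hTdef
  set DT : EuclideanSpace ℝ (Fin d) →
      (EuclideanSpace ℝ (Fin d) →L[ℝ] EuclideanSpace ℝ (Fin d)) :=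
    fun x => 1 + τ • fderiv ℝ φ x with hDTdef
  have hDT : ∀ x, HasFDerivAt T (DT x) x := by
    intro x
    exact (hasFDerivAt_id x).add ((hφd x).hasFDerivAt.const_smul τ)
  have hDφ_norm : ∀ x, ‖fderiv ℝ φ x‖ ≤ L' := by
    intro x
    have := norm_fderiv_le_of_lipschitz ℝ hlipW (x₀ := x)
    rwa [Real.coe_toNNReal _ hL'0] at this
  have hsmall : ∀ x, ‖τ • fderiv ℝ φ x‖ < 1 := by
    intro x
    rw [norm_smul, Real.norm_eq_abs]
    calc |τ| * ‖fderiv ℝ φ x‖ ≤ |τ| * L' :=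
          mul_le_mul_of_nonneg_left (hDφ_norm x) (abs_nonneg τ)
      _ < 1 := hτL'
  have hunit : ∀ x, IsUnit (DT x) := by
    intro x
    have h : ‖-(τ • fderiv ℝ φ x)‖ < 1 := by rw [norm_neg]; exact hsmall x
    refine ⟨Units.oneSub _ h, ?_⟩
    show (1 : EuclideanSpace ℝ (Fin d) →L[ℝ] EuclideanSpace ℝ (Fin d))
      - -(τ • fderiv ℝ φ x) = DT x
    rw [sub_neg_eq_add]
  have hdet_ne : ∀ x, (DT x).det ≠ 0 := by
    intro x
    have h1 : IsUnit ((DT x : EuclideanSpace ℝ (Fin d) →ₗ[ℝ] EuclideanSpace ℝ (Fin d))) :=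
      (hunit x).map (ContinuousLinearMap.toLinearMapRingHom
        (R₁ := ℝ) (M₁ := EuclideanSpace ℝ (Fin d)))
    exact (h1.map LinearMap.det).ne_zero
  have hTcont : Continuous T := continuous_id.add (hφ.continuous.const_smul τ)
  have hTmeas : Measurable T := hTcont.measurable
  have hTinj : Function.Injective T := by
    intro x y hxy
    by_contra hne
    have hxy' : x + τ • φ x = y + τ • φ y := hxy
    have h1 : x - y = τ • (φ y - φ x) := by
      rw [smul_sub, sub_eq_sub_iff_add_eq_add, hxy', add_comm]
    have h2 : ‖x - y‖ ≤ |τ| * (L' * ‖x - y‖) := by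
      calc ‖x - y‖ = |τ| * ‖φ y - φ x‖ := by rw [h1, norm_smul, Real.norm_eq_abs]
        _ ≤ |τ| * (L' * ‖x - y‖) := by
            refine mul_le_mul_of_nonneg_left ?_ (abs_nonneg τ)
            calc ‖φ y - φ x‖ ≤ L' * ‖y - x‖ := hLip' y x
              _ = L' * ‖x - y‖ := by rw [norm_sub_rev]
    have h3 : 0 < ‖x - y‖ := by
      rw [norm_pos_iff]
      exact sub_ne_zero.mpr hne
    nlinarith
  set K : Set (EuclideanSpace ℝ (Fin d)) := tsupport φ with hKdef
  have hK : IsCompact K := hφc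
  have hKm : MeasurableSet K := (isClosed_tsupport φ).measurableSet
  have hT_eq : ∀ x ∉ K, T x = x := by
    intro x hx
    have : φ x = 0 := image_eq_zero_of_notMem_tsupport hx
    simp [hTdef, this]
  have hΦT_K : IntegrableOn (fun x => Φ (T x)) K volume := by
    rcases K.eq_empty_or_nonempty with hKe | hKne
    · rw [hKe]; exact integrableOn_empty
    have hdet_cont : Continuous fun x => |(DT x).det| := by
      have h1 : Continuous fun x => DT x :=
        continuous_const.add ((hφ.continuous_fderiv one_ne_zero).const_smul τ)
      exact (ContinuousLinearMap.continuous_det.comp h1).abs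
    obtain ⟨x₀, hx₀K, hmin⟩ := hK.exists_isMinOn hKne hdet_cont.continuousOn
    set c : ℝ := |(DT x₀).det| with hcdef
    have hc_pos : 0 < c := abs_pos.mpr (hdet_ne x₀)
    have hc_le : ∀ x ∈ K, c ≤ |(DT x).det| := fun x hx => hmin hx
    have hCoV := lintegral_image_eq_lintegral_abs_det_fderiv_mul volume hKm
      (fun x _ => (hDT x).hasFDerivWithinAt) (hTinj.injOn) (fun y => (‖Φ y‖₊ : ENNReal))
    have hTK_int : IntegrableOn Φ (T '' K) volume :=
      hΦ_loc.integrableOn_isCompact (hK.image hTcont)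
    have hfin : (∫⁻ x in K, ENNReal.ofReal |(DT x).det| * (‖Φ (T x)‖₊ : ENNReal) ∂volume) < ⊤ := by
      rw [← hCoV]
      exact hTK_int.2
    have hcne : (ENNReal.ofReal c) ≠ 0 := (ENNReal.ofReal_pos.mpr hc_pos).ne'
    have hcinv_ne_top : (ENNReal.ofReal c)⁻¹ ≠ ⊤ := ENNReal.inv_ne_top.mpr hcne
    have hbound : (∫⁻ x in K, (‖Φ (T x)‖₊ : ENNReal) ∂volume) ≤
        (ENNReal.ofReal c)⁻¹ *
          ∫⁻ x in K, ENNReal.ofReal |(DT x).det| * (‖Φ (T x)‖₊ : ENNReal) ∂volume := by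
      rw [← lintegral_const_mul' _ _ hcinv_ne_top]
      apply setLIntegral_mono' hKm
      intro x hx
      have h1 : ENNReal.ofReal c ≤ ENNReal.ofReal |(DT x).det| :=
        ENNReal.ofReal_le_ofReal (hc_le x hx)
      calc (‖Φ (T x)‖₊ : ENNReal)
          = (ENNReal.ofReal c)⁻¹ * ENNReal.ofReal c * (‖Φ (T x)‖₊ : ENNReal) := by
            rw [ENNReal.inv_mul_cancel hcne ENNReal.ofReal_ne_top, one_mul]
        _ ≤ (ENNReal.ofReal c)⁻¹ * ENNReal.ofReal |(DT x).det| * (‖Φ (T x)‖₊ : ENNReal) := by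
            gcongr
        _ = (ENNReal.ofReal c)⁻¹ *
              (ENNReal.ofReal |(DT x).det| * (‖Φ (T x)‖₊ : ENNReal)) := by
            rw [mul_assoc]
    refine ⟨(hΦ_meas.comp hTmeas).aestronglyMeasurable, ?_⟩
    refine lt_of_le_of_lt hbound ?_
    exact ENNReal.mul_lt_top (lt_top_iff_ne_top.mpr hcinv_ne_top) hfin
  have hIK : IntegrableOn (fun x => Φ (T x) * v x) K volume := by
    refine Integrable.mono' ((hΦT_K.norm).const_mul (max M 0)) ?_ ?_
    · exact ((hΦ_meas.comp hTmeas).mul hv_meas).aestronglyMeasurable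
    · filter_upwards with x
      rw [norm_mul]
      calc ‖Φ (T x)‖ * ‖v x‖ ≤ ‖Φ (T x)‖ * max M 0 := by
            apply mul_le_mul_of_nonneg_left _ (norm_nonneg _)
            rw [Real.norm_eq_abs, abs_of_nonneg (hv_nonneg x)]
            exact le_max_of_le_left (hM x)
        _ = max M 0 * ‖Φ (T x)‖ := mul_comm _ _
  have hIKc : IntegrableOn (fun x => Φ (T x) * v x) Kᶜ volume := by
    apply (hΦv_int.integrableOn).congr_fun ?_ hKm.compl
    intro x hx
    simp only
    rw [hT_eq x hx]
  have hfull := hIK.union hIKc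
  rw [Set.union_compl_self, integrableOn_univ] at hfull
  exact hfull
end
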